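/- Let Γ be a finite connected digraph that is not a directed cycle, let G ≤ Aut(Γ) be bi-quasiprimitive on the vertex set, and suppose Γ is (G,s)-arc-transitive with s ≥ 4. Let G^+ be an index-2 subgroup of G having two orbits Δ and Δ' on the vertices, let H be the permutation group induced by G^+ on Δ, suppose G^+ = Diag_φ(H × H) for some φ ∈ Aut(H), and suppose H has a minimal normal subgroup R, intransitive on Δ, with R^φ ≠ R, M := R × R^φ transitive on Δ, and N := Diag_φ(M × M) a minimal normal subgroup of G. Let Γ' = (Δ, A_2) be the bipartite half on Δ and let C := C_H(R) be the centralizer of R in H. Then C is intransitive on Δ with more than two orbits, and the H-normal quotient (Γ')_C is a connected digraph that is not a directed cycle, on which H/C acts faithfully, vertex-quasiprimitively, and transitively on floor(s/2)-arcs. -/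

import Mathlib

/-!
Statement 0: normal quotients of (G,s)-arc-transitive digraphs (Proposition p:quot(a)).
-/

namespace ArcTransDigraph

variable {V : Type*}

/-- The arc set of a digraph is asymmetric (in particular loopless). -/
def IsDigraph (A : V → V → Prop) : Prop := ∀ u v : V, A u v → ¬ A v u

/-- Connectivity of the underlying undirected graph. -/
def Connected (A : V → V → Prop) : Prop :=
  ∀ u v : V, Relation.ReflTransGen (fun a b => A a b ∨ A b a) u v

/-- `G` consists of automorphisms of the digraph `(V, A)`. -/
def PreservesArcs (A : V → V → Prop) (G : Subgroup (Equiv.Perm V)) : Prop :=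
  ∀ g ∈ G, ∀ u v : V, A u v → A (g u) (g v)

/-- `G` is transitive on vertices. -/
def VertexTransitive (G : Subgroup (Equiv.Perm V)) : Prop :=
  ∀ u v : V, ∃ g ∈ G, g u = v

/-- `p` is an `s`-arc of the digraph with arc set `A`. -/
def IsArcSeq (A : V → V → Prop) (s : ℕ) (p : Fin (s + 1) → V) : Prop :=
  ∀ i : Fin s, A (p i.castSucc) (p i.succ)

/-- `G` is transitive on the `s`-arcs of the digraph with arc set `A`. -/
def ArcTransitive (A : V → V → Prop) (G : Subgroup (Equiv.Perm V)) (s : ℕ) : Prop :=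
  ∀ p q : Fin (s + 1) → V, IsArcSeq A s p → IsArcSeq A s q →
    ∃ g ∈ G, ∀ i : Fin (s + 1), g (p i) = q i

/-- `N` is a subgroup of `G` which is normal in `G`. -/
def NormalIn (N G : Subgroup (Equiv.Perm V)) : Prop :=
  N ≤ G ∧ ∀ g ∈ G, ∀ x ∈ N, g * x * g⁻¹ ∈ N

/-- The digraph with arc set `B` on vertex set `α` is isomorphic to the directed cycle
`C_r→`, whose vertex set is `Z_r` with arcs `(i, i+1)`. -/
def IsoDirectedCycle {α : Type*} (B : α → α → Prop) (r : ℕ) : Prop :=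
  ∃ e : α ≃ ZMod r, ∀ a b : α, B a b ↔ e b = e a + 1

/-- `G` is bi-quasiprimitive on `V`: every nontrivial normal subgroup has at most two
orbits, and some normal subgroup has exactly two orbits. -/
def BiQuasiprimitive (G : Subgroup (Equiv.Perm V)) : Prop :=
  (∀ L : Subgroup (Equiv.Perm V), NormalIn L G → L ≠ ⊥ →
    Nat.card (Quotient (MulAction.orbitRel L V)) ≤ 2) ∧
  (∃ L : Subgroup (Equiv.Perm V), NormalIn L G ∧
    Nat.card (Quotient (MulAction.orbitRel L V)) = 2)

/-- The homomorphism `G⁺ → Sym(Δ)` induced by restriction to the invariant set `Δ`;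
its image is the permutation group `H` induced by `G⁺` on `Δ`. -/
def inducedHom (Δ : Set V) (Gp : Subgroup (Equiv.Perm V))
    (h : ∀ b ∈ Gp, ∀ v : V, v ∈ Δ ↔ b v ∈ Δ) : Gp →* Equiv.Perm ↥Δ where
  toFun b := Equiv.Perm.subtypePerm (b : Equiv.Perm V) (fun v => (h (b : Equiv.Perm V) b.2 v).symm)
  map_one' := by
    ext x
    simp [Equiv.Perm.subtypePerm]
  map_mul' a b := by
    ext x
    simp [Equiv.Perm.subtypePerm]

/-- The homomorphism `G⁺ → Sym(Δ)` recording the action of `G⁺` on `Δ'` after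
identifying `Δ'` with `Δ` by means of the element `g` (which maps `Δ` onto `Δ'`):
`b` is sent to the permutation `x ↦ g⁻¹(b(g x))` of `Δ`. -/
def conjHom (Δ Δ' : Set V) (Gp : Subgroup (Equiv.Perm V)) (g : Equiv.Perm V)
    (h' : ∀ b ∈ Gp, ∀ v : V, v ∈ Δ' ↔ b v ∈ Δ')
    (hg : ∀ v : V, v ∈ Δ ↔ g v ∈ Δ') : Gp →* Equiv.Perm ↥Δ where
  toFun b := Equiv.Perm.subtypePerm (g⁻¹ * (b : Equiv.Perm V) * g)
    (by
      intro v
      have h1 := hg v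
      have h2 := h' (b : Equiv.Perm V) b.2 (g v)
      have h3 := hg (g⁻¹ ((b : Equiv.Perm V) (g v)))
      simp only [Equiv.Perm.mul_apply]
      rw [h1, h2, h3]
      simp)
  map_one' := by
    ext x
    simp [Equiv.Perm.subtypePerm]
  map_mul' a b := by
    ext x
    simp [Equiv.Perm.subtypePerm]

/-- `L` is a minimal normal subgroup of `G`. -/
def MinimalNormalIn (L G : Subgroup (Equiv.Perm V)) : Prop :=
  NormalIn L G ∧ L ≠ ⊥ ∧
    ∀ L' : Subgroup (Equiv.Perm V), NormalIn L' G → L' ≠ ⊥ → L' ≤ L → L' = L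

/-- The `N`-orbit of a vertex, as a point of the orbit space `V_N`. -/
def orbMk {W : Type*} (N : Subgroup (Equiv.Perm W)) (v : W) :
    Quotient (MulAction.orbitRel N W) :=
  Quotient.mk _ v

/-- The arc set of the quotient digraph `Γ_N`. -/
def quotArc {W : Type*} (A : W → W → Prop) (N : Subgroup (Equiv.Perm W)) :
    Quotient (MulAction.orbitRel N W) → Quotient (MulAction.orbitRel N W) → Prop :=
  fun U U' => ∃ u u' : W, orbMk N u = U ∧ orbMk N u' = U' ∧ A u u'

/-- The arc set of the bipartite half `Γ' = (Δ, A₂)`, as a relation on the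
subtype `↥Δ`. -/
def subHalfArc (A : V → V → Prop) (Δ Δ' : Set V) : ↥Δ → ↥Δ → Prop :=
  fun x y => ∃ v ∈ Δ', A (x : V) v ∧ A v (y : V)



open scoped commutatorElement

theorem Equiv.Perm.inv_apply_self {α : Type*} (f : Equiv.Perm α) (x : α) : f⁻¹ (f x) = x :=
  Equiv.Perm.inv_eq_iff_eq.mpr rfl

theorem Equiv.Perm.apply_inv_self {α : Type*} (f : Equiv.Perm α) (x : α) : f (f⁻¹ x) = x :=
  (Equiv.eq_symm_apply f).mp rfl

lemma index_two_mul_mem {G : Type*} [Group G] {K : Subgroup G} (h : K.index = 2)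
    {a b : G} (ha : a ∉ K) (hb : b ∉ K) : a * b ∈ K := by
  obtain ⟨c, hc⟩ := Subgroup.index_eq_two_iff.mp h
  have hac : a * c ∈ K := by
    rcases hc a with ⟨h1, _⟩ | ⟨h1, _⟩
    · exact h1
    · exact absurd h1 ha
  have hbinv : b⁻¹ ∉ K := fun hbi => hb (by simpa using K.inv_mem hbi)
  have hbc : b⁻¹ * c ∈ K := by
    rcases hc b⁻¹ with ⟨h1, _⟩ | ⟨h1, _⟩
    · exact h1
    · exact absurd h1 hbinv
  have : (a * c) * (b⁻¹ * c)⁻¹ ∈ K := K.mul_mem hac (K.inv_mem hbc)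
  have he : (a * c) * (b⁻¹ * c)⁻¹ = a * b := by group
  rwa [he] at this

lemma index_two_conj_mem {G : Type*} [Group G] {K : Subgroup G} (h : K.index = 2)
    {a x : G} (hx : x ∈ K) : a * x * a⁻¹ ∈ K := by
  by_cases ha : a ∈ K
  · exact K.mul_mem (K.mul_mem ha hx) (K.inv_mem ha)
  · have hax : a * x ∉ K := by
      intro hax
      exact ha (by simpa using K.mul_mem hax (K.inv_mem hx))
    have hainv : a⁻¹ ∉ K := fun hi => ha (by simpa using K.inv_mem hi)
    exact index_two_mul_mem h hax hainv

lemma outdeg_one_powers {α : Type*} [Finite α] [Nonempty α] (B : α → α → Prop)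
    (hconn : ∀ a b, Relation.ReflTransGen (fun x y => B x y ∨ B y x) a b)
    (hout : ∀ a, ∃ b, B a b) (hin : ∀ a, ∃ b, B b a)
    (h1 : ∀ a b b', B a b → B a b' → b = b') :
    ∃ σ : Equiv.Perm α, (∀ a b, B a b ↔ σ a = b) ∧
      ∀ f : Equiv.Perm α, (∀ a b, B a b → B (f a) (f b)) → ∃ k : ℤ, f = σ ^ k := by
  classical
  choose nxt hnxt using hout
  have hsurj : Function.Surjective nxt := by
    intro a
    obtain ⟨b, hb⟩ := hin a
    exact ⟨b, h1 _ _ _ (hnxt b) hb⟩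
  have hbij : Function.Bijective nxt :=
    ⟨Finite.injective_iff_surjective.mpr hsurj, hsurj⟩
  refine ⟨Equiv.ofBijective nxt hbij, ?_, ?_⟩
  case _ =>
    intro a b
    constructor
    · intro h; exact h1 a _ _ (hnxt a) h
    · rintro rfl; exact hnxt a
  set σ := Equiv.ofBijective nxt hbij with hσdef
  have hσ : ∀ a b, B a b ↔ σ a = b := by
    intro a b
    constructor
    · intro h; exact h1 a _ _ (hnxt a) h
    · rintro rfl; exact hnxt a
  have hreach : ∀ a b : α, ∃ k : ℤ, (σ ^ k) a = b := by
    intro a b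
    induction hconn a b with
    | refl => exact ⟨0, rfl⟩
    | tail hab step ih =>
      obtain ⟨k, hk⟩ := ih
      rcases step with hs | hs
      · refine ⟨k + 1, ?_⟩
        have : σ _ = _ := (hσ _ _).mp hs
        rw [show k + 1 = 1 + k by ring, zpow_add, zpow_one, Equiv.Perm.mul_apply, hk, this]
      · refine ⟨k - 1, ?_⟩
        have hs' : σ _ = _ := (hσ _ _).mp hs
        have : (σ ^ (k - 1)) a = σ⁻¹ ((σ ^ k) a) := by
          rw [show k - 1 = -1 + k by ring, zpow_add, Equiv.Perm.mul_apply, zpow_neg_one]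
        rw [this, hk, ← hs', Equiv.Perm.inv_apply_self]
  intro f hf
  have hcomm : Commute f σ := by
    apply Equiv.ext
    intro a
    have h1' : B a (σ a) := (hσ a (σ a)).mpr rfl
    have h2' : B (f a) (f (σ a)) := hf _ _ h1'
    have : σ (f a) = f (σ a) := (hσ _ _).mp h2'
    simp only [Equiv.Perm.mul_apply]
    exact this.symm
  obtain ⟨a₀⟩ := ‹Nonempty α›
  obtain ⟨k, hk⟩ := hreach a₀ (f a₀)
  refine ⟨k, Equiv.ext fun x => ?_⟩
  obtain ⟨m, hm⟩ := hreach a₀ x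
  have hcz : f * σ ^ m = σ ^ m * f := (hcomm.zpow_right m).eq
  have happ : f ((σ ^ m) a₀) = (σ ^ m) (f a₀) := by
    have := congrArg (fun (e : Equiv.Perm α) => e a₀) hcz
    simpa [Equiv.Perm.mul_apply] using this
  calc f x = f ((σ ^ m) a₀) := by rw [hm]
    _ = (σ ^ m) (f a₀) := happ
    _ = (σ ^ m) ((σ ^ k) a₀) := by rw [hk]
    _ = (σ ^ k) ((σ ^ m) a₀) := by
        have : σ ^ m * σ ^ k = σ ^ k * σ ^ m := ((Commute.refl σ).zpow_zpow m k).eq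
        have := congrArg (fun (e : Equiv.Perm α) => e a₀) this
        simpa [Equiv.Perm.mul_apply] using this
    _ = (σ ^ k) x := by rw [hm]

lemma zpowers_subgroup_card_eq {G : Type*} [Group G] [Finite G] (σ : G) (S T : Subgroup G)
    (hS : S ≤ Subgroup.zpowers σ) (hT : T ≤ Subgroup.zpowers σ)
    (hcard : Nat.card S = Nat.card T) : S = T := by
  classical
  haveI : Fintype G := Fintype.ofFinite G
  haveI hic : IsCyclic ↥(Subgroup.zpowers σ) := by
    refine ⟨⟨⟨σ, Subgroup.mem_zpowers σ⟩, ?_⟩⟩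
    rintro ⟨x, hx⟩
    obtain ⟨k, hk⟩ := Subgroup.mem_zpowers_iff.mp hx
    refine ⟨k, ?_⟩
    ext
    simpa using hk
  set Z := Subgroup.zpowers σ
  set S' := S.subgroupOf Z with hS'
  set T' := T.subgroupOf Z with hT'
  have hcards : Nat.card S' = Nat.card S := Nat.card_congr (Subgroup.subgroupOfEquivOfLe hS).toEquiv
  have hcardt : Nat.card T' = Nat.card T := Nat.card_congr (Subgroup.subgroupOfEquivOfLe hT).toEquiv
  set n := Nat.card S with hn
  have hnpos : 0 < n := Nat.card_pos
  have hTn : Nat.card T' = n := by rw [hcardt, ← hcard]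
  have hSn : Nat.card S' = n := by rw [hcards]
  -- every element of S' and T' satisfies x ^ n = 1
  have hpow : ∀ (W : Subgroup ↥Z), Nat.card W = n → ∀ x ∈ W, x ^ n = 1 := by
    intro W hW x hx
    have : (⟨x, hx⟩ : W) ^ n = 1 := by
      rw [← hW]
      exact pow_card_eq_one' 
    have := congrArg (Subtype.val) this
    simpa using this
  -- counting
  have hΦcard : (Finset.univ.filter (fun (x : ↥Z) => x ^ n = 1)).card ≤ n :=
    IsCyclic.card_pow_eq_one_le hnpos
  have hWcard : ∀ (W : Subgroup ↥Z), (Finset.univ.filter (fun x => x ∈ W)).card = Nat.card W := by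
    intro W
    rw [Nat.card_eq_fintype_card]
    exact (Fintype.card_subtype _).symm
  have key : ∀ (W : Subgroup ↥Z), Nat.card W = n →
      Finset.univ.filter (fun x => x ∈ W) = Finset.univ.filter (fun (x : ↥Z) => x ^ n = 1) := by
    intro W hW
    apply Finset.eq_of_subset_of_card_le
    · intro x hx
      simp only [Finset.mem_filter, Finset.mem_univ, true_and] at hx ⊢
      exact hpow W hW x hx
    · have := hWcard W
      omega
  have hST' : S' = T' := by
    ext x
    have h1 := key S' hSn
    have h2 := key T' hTn
    have : (Finset.univ.filter (fun y => y ∈ S')) = (Finset.univ.filter (fun y => y ∈ T')) := by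
      rw [h1, h2]
    have hx := Finset.ext_iff.mp this x
    simpa using hx
  ext x
  constructor
  · intro hx
    have hxZ : x ∈ Z := hS hx
    have : (⟨x, hxZ⟩ : ↥Z) ∈ S' := by simpa [hS', Subgroup.mem_subgroupOf]
    rw [hST'] at this
    simpa [hT', Subgroup.mem_subgroupOf] using this
  · intro hx
    have hxZ : x ∈ Z := hT hx
    have : (⟨x, hxZ⟩ : ↥Z) ∈ T' := by simpa [hT', Subgroup.mem_subgroupOf]
    rw [← hST'] at this
    simpa [hS', Subgroup.mem_subgroupOf] using this

lemma zmod_rot {r : ℕ} (hr : 3 ≤ r) (f : ZMod r → ZMod r) (hf : ∀ x, f (x + 1) = f x + 1) :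
    ∀ x, f x = x + f 0 := by
  haveI : NeZero r := ⟨by omega⟩
  have h : ∀ n : ℕ, f (n : ZMod r) = (n : ZMod r) + f 0 := by
    intro n
    induction n with
    | zero => simp
    | succ m ih =>
      push_cast
      rw [hf, ih]
      ring
  intro x
  have := h x.val
  rwa [ZMod.natCast_rightInverse x] at this

lemma orbMk_eq_iff {α : Type*} (C : Subgroup (Equiv.Perm α)) (x y : α) :
    orbMk C x = orbMk C y ↔ ∃ c ∈ C, c y = x := by
  constructor
  · intro h
    have h' := Quotient.eq.mp h
    rw [MulAction.orbitRel_apply, MulAction.mem_orbit_iff] at h'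
    obtain ⟨⟨c, hc⟩, hce⟩ := h'
    exact ⟨c, hc, hce⟩
  · rintro ⟨c, hc, hce⟩
    refine Quotient.sound ?_
    have hmem : x ∈ MulAction.orbit C y := MulAction.mem_orbit_iff.mpr ⟨⟨c, hc⟩, hce⟩
    exact MulAction.orbitRel_apply.mpr hmem

lemma equiv_comm_of_card_two {β : Type*} (hb : Nat.card β = 2) (F G : β ≃ β) (a : β) :
    F (G a) = G (F a) := by
  obtain ⟨x, y, hxy, hcov⟩ := Nat.card_eq_two_iff.mp hb
  have hmem : ∀ z : β, z = x ∨ z = y := by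
    intro z
    have : z ∈ ({x, y} : Set β) := hcov ▸ Set.mem_univ z
    simpa using this
  have hdich : ∀ (F : β ≃ β), (F x = x ∧ F y = y) ∨ (F x = y ∧ F y = x) := by
    intro F
    rcases hmem (F x) with h1 | h1
    · rcases hmem (F y) with h2 | h2
      · exact absurd (F.injective (h2.trans h1.symm)) (Ne.symm hxy)
      · exact Or.inl ⟨h1, h2⟩
    · rcases hmem (F y) with h2 | h2
      · exact Or.inr ⟨h1, h2⟩
      · exact absurd (F.injective (h2.trans h1.symm)) (Ne.symm hxy)
  have hval : ∀ (F : β ≃ β) (z : β), (F x = x ∧ F y = y) → F z = z := by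
    intro F z ⟨h1, h2⟩
    rcases hmem z with rfl | rfl <;> assumption
  rcases hdich F with hF | hF
  · rw [hval F _ hF, hval F _ hF]
  · rcases hdich G with hG | hG
    · rw [hval G a hG, hval G (F a) hG]
    · rcases hmem a with rfl | rfl
      · rw [hG.1, hF.2, hF.1, hG.2]
      · rw [hG.2, hF.1, hF.2, hG.1]





lemma three_le_nat_card {β : Type*} [Finite β] {a b c : β} (hab : a ≠ b) (hac : a ≠ c)
    (hbc : b ≠ c) : 3 ≤ Nat.card β := by
  haveI := Fintype.ofFinite β
  haveI := Classical.decEq β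
  rw [Nat.card_eq_fintype_card]
  have h1 : ({a, b, c} : Finset β).card ≤ Fintype.card β := Finset.card_le_univ _
  have h2 : ({a, b, c} : Finset β).card = 3 := by
    rw [Finset.card_insert_of_notMem (by simp [hab, hac]),
      Finset.card_insert_of_notMem (by simp [hbc]), Finset.card_singleton]
  omega

lemma quotPerm {α : Type*} (C : Subgroup (Equiv.Perm α)) (h : Equiv.Perm α)
    (hn : ∀ c ∈ C, h * c * h⁻¹ ∈ C) (hn2 : ∀ c ∈ C, h⁻¹ * c * h ∈ C) :
    ∃ F : Quotient (MulAction.orbitRel C α) ≃ Quotient (MulAction.orbitRel C α),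
      ∀ x : α, F (orbMk C x) = orbMk C (h x) := by
  have key : ∀ (h' : Equiv.Perm α), (∀ c ∈ C, h' * c * h'⁻¹ ∈ C) →
      ∀ x y : α, (MulAction.orbitRel C α) x y → orbMk C (h' x) = orbMk C (h' y) := by
    intro h' hn' x y hxy
    have hxy' : orbMk C x = orbMk C y := Quotient.sound hxy
    obtain ⟨c, hc, hce⟩ := (orbMk_eq_iff C x y).mp hxy'
    refine (orbMk_eq_iff C _ _).mpr ⟨h' * c * h'⁻¹, hn' c hc, ?_⟩
    simp only [Equiv.Perm.mul_apply, Equiv.Perm.inv_apply_self]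
    rw [hce]
  have hn2' : ∀ c ∈ C, h⁻¹ * c * h⁻¹⁻¹ ∈ C := by simpa using hn2
  refine ⟨⟨Quotient.lift (fun x => orbMk C (h x)) (fun a b hab => key h hn a b hab),
          Quotient.lift (fun x => orbMk C (h⁻¹ x)) (fun a b hab => key h⁻¹ hn2' a b hab),
          ?_, ?_⟩, ?_⟩
  · intro q
    induction q using Quotient.ind with
    | _ x =>
      show orbMk C (h⁻¹ (h x)) = Quotient.mk _ x
      exact congrArg (orbMk C) (Equiv.Perm.inv_apply_self h x)
  · intro q
    induction q using Quotient.ind with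
    | _ x =>
      show orbMk C (h (h⁻¹ x)) = Quotient.mk _ x
      exact congrArg (orbMk C) (Equiv.Perm.apply_inv_self h x)
  · intro x
    rfl



/-- Auxiliary: the subgroup of elements of `K` that fix every `C`-orbit setwise. -/
def fixSubgroup {α : Type*} (C K : Subgroup (Equiv.Perm α)) : Subgroup (Equiv.Perm α) where
  carrier := {z | z ∈ K ∧ ∀ x : α, orbMk C (z x) = orbMk C x}
  one_mem' := ⟨K.one_mem, fun _ => rfl⟩
  mul_mem' := by
    rintro a b ⟨haK, ha⟩ ⟨hbK, hb⟩
    refine ⟨K.mul_mem haK hbK, fun x => ?_⟩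
    have e : (a * b) x = a (b x) := rfl
    rw [e, ha (b x), hb x]
  inv_mem' := by
    rintro a ⟨haK, ha⟩
    refine ⟨K.inv_mem haK, fun x => ?_⟩
    have h9 := ha (a⁻¹ x)
    rw [Equiv.Perm.apply_inv_self] at h9
    exact h9.symm

lemma mem_fixSubgroup {α : Type*} (C K : Subgroup (Equiv.Perm α)) (z : Equiv.Perm α) :
    z ∈ fixSubgroup C K ↔ (z ∈ K ∧ ∀ x : α, orbMk C (z x) = orbMk C x) := Iff.rfl

set_option maxHeartbeats 2000000 in
theorem biquasiprimitive_case_d_quotient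
    [Finite V] (A : V → V → Prop) (G Gp : Subgroup (Equiv.Perm V)) (s : ℕ)
    (Δ Δ' : Set V) (g : Equiv.Perm V)
    (hdig : IsDigraph A) (hconn : Connected A) (hAut : PreservesArcs A G)
    (hvt : VertexTransitive G) (hs : 4 ≤ s) (hat : ArcTransitive A G s)
    (hnotcyc : ∀ r : ℕ, 3 ≤ r → ¬ IsoDirectedCycle A r)
    (hbqp : BiQuasiprimitive G)
    (hGpG : Gp ≤ G) (hidx : (Gp.subgroupOf G).index = 2)
    -- Δ and Δ' are the two orbits of G⁺ on the vertex set
    (hdis : Disjoint Δ Δ') (hcov : Δ ∪ Δ' = Set.univ)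
    (hΔ : ∀ b ∈ Gp, ∀ v : V, v ∈ Δ ↔ b v ∈ Δ)
    (hΔ' : ∀ b ∈ Gp, ∀ v : V, v ∈ Δ' ↔ b v ∈ Δ')
    (htransΔ : ∀ u ∈ Δ, ∀ v ∈ Δ, ∃ b ∈ Gp, b u = v)
    (htransΔ' : ∀ u ∈ Δ', ∀ v ∈ Δ', ∃ b ∈ Gp, b u = v)
    (hgG : g ∈ G) (hgnot : g ∉ Gp)
    (hgswap : ∀ v : V, v ∈ Δ ↔ g v ∈ Δ') (hg2 : g * g ∈ Gp)
    -- G⁺ = Diag_φ(H × H), where H = (inducedHom Δ Gp hΔ).range is the permutation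
    -- group induced by G⁺ on Δ
    (φ : (inducedHom Δ Gp hΔ).range ≃* (inducedHom Δ Gp hΔ).range)
    (hdiag : ∀ b : Gp,
      (conjHom Δ Δ' Gp g hΔ' hgswap b : Equiv.Perm ↥Δ) =
        ((φ ⟨inducedHom Δ Gp hΔ b, MonoidHom.mem_range.mpr ⟨b, rfl⟩⟩ :
          (inducedHom Δ Gp hΔ).range) : Equiv.Perm ↥Δ))
    -- R is a minimal normal subgroup of H which is intransitive on Δ
    (R : Subgroup (Equiv.Perm ↥Δ))
    (hRmin : MinimalNormalIn R (inducedHom Δ Gp hΔ).range)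
    (hRintrans : ¬ ∀ x y : ↥Δ, ∃ a ∈ R, a x = y)
    -- Rφ is the image R^φ of R under φ, and R^φ ≠ R
    (Rφ : Subgroup (Equiv.Perm ↥Δ))
    (hRφ : Rφ = Subgroup.map (inducedHom Δ Gp hΔ).range.subtype
      (Subgroup.map φ.toMonoidHom (R.subgroupOf (inducedHom Δ Gp hΔ).range)))
    (hRφne : Rφ ≠ R)
    -- M = R × R^φ is transitive on Δ
    (M : Subgroup (Equiv.Perm ↥Δ)) (hM : M = R ⊔ Rφ)
    (hMtrans : ∀ x y : ↥Δ, ∃ m ∈ M, m x = y)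
    -- N = Diag_φ(M × M), i.e. the subgroup of G⁺ consisting of the elements whose
    -- induced permutation of Δ lies in M, is a minimal normal subgroup of G
    (N : Subgroup (Equiv.Perm V))
    (hN : N = Subgroup.map Gp.subtype (Subgroup.comap (inducedHom Δ Gp hΔ) M))
    (hNmin : MinimalNormalIn N G)
    -- C = C_H(R) is the centralizer of R in H
    (C : Subgroup (Equiv.Perm ↥Δ))
    (hC : C = (inducedHom Δ Gp hΔ).range ⊓
      Subgroup.centralizer (R : Set (Equiv.Perm ↥Δ))) :
    -- C is intransitive on Δ with more than two orbits
    (3 ≤ Nat.card (Quotient (MulAction.orbitRel C ↥Δ))) ∧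
    -- the H-normal quotient (Γ')_C of the bipartite half Γ' = (Δ, A₂) is a
    -- connected digraph which is not a directed cycle
    IsDigraph (quotArc (subHalfArc A Δ Δ') C) ∧
    Connected (quotArc (subHalfArc A Δ Δ') C) ∧
    (∀ r : ℕ, 3 ≤ r → ¬ IsoDirectedCycle (quotArc (subHalfArc A Δ Δ') C) r) ∧
    -- H/C acts faithfully on (Γ')_C
    (∀ h ∈ (inducedHom Δ Gp hΔ).range,
      (∀ x : ↥Δ, orbMk C (h x) = orbMk C x) → h ∈ C) ∧
    -- H/C is vertex-transitive on (Γ')_C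
    (∀ U U' : Quotient (MulAction.orbitRel C ↥Δ),
      ∃ h ∈ (inducedHom Δ Gp hΔ).range,
        ∀ x : ↥Δ, orbMk C x = U → orbMk C (h x) = U') ∧
    -- H/C is vertex-quasiprimitive on (Γ')_C: every nontrivial normal subgroup
    -- L/C of H/C (with C < L ⊴ H) is transitive on the C-orbits
    (∀ L : Subgroup (Equiv.Perm ↥Δ), NormalIn L (inducedHom Δ Gp hΔ).range →
      C ≤ L → C ≠ L → ∀ x y : ↥Δ, ∃ l ∈ L, orbMk C (l x) = orbMk C y) ∧
    -- H/C is transitive on the ⌊s/2⌋-arcs of (Γ')_C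
    (∀ p q : Fin (s / 2 + 1) → Quotient (MulAction.orbitRel C ↥Δ),
      IsArcSeq (quotArc (subHalfArc A Δ Δ') C) (s / 2) p →
      IsArcSeq (quotArc (subHalfArc A Δ Δ') C) (s / 2) q →
      ∃ h ∈ (inducedHom Δ Gp hΔ).range,
        ∀ (i : Fin (s / 2 + 1)) (x : ↥Δ), orbMk C x = p i → orbMk C (h x) = q i) := by
  classical
  -- ======== Part A: basics ========
  have hΔne : ∃ v, v ∈ Δ := by
    rcases Set.eq_empty_or_nonempty Δ with he | ⟨v, hv⟩
    · exfalso
      apply hRintrans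
      intro x
      exact absurd x.2 (by simp [he])
    · exact ⟨v, hv⟩
  obtain ⟨v₀, hv₀⟩ := hΔne
  have u₀ : ↥Δ := ⟨v₀, hv₀⟩
  have hΔ'ne : ∃ v, v ∈ Δ' := ⟨g v₀, (hgswap v₀).mp hv₀⟩
  obtain ⟨w₀, hw₀⟩ := hΔ'ne
  have hdisj : ∀ v : V, v ∈ Δ → v ∈ Δ' → False := fun v h1 h2 =>
    Set.disjoint_left.mp hdis h1 h2
  have hcover : ∀ v : V, v ∈ Δ ∨ v ∈ Δ' := by
    intro v
    have : v ∈ Δ ∪ Δ' := hcov ▸ Set.mem_univ v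
    simpa using this
  have hnn : ∀ {a b : Equiv.Perm V}, a ∈ G → b ∈ G → a ∉ Gp → b ∉ Gp → a * b ∈ Gp := by
    intro a b haG hbG ha hb
    have h := index_two_mul_mem hidx (a := (⟨a, haG⟩ : ↥G)) (b := ⟨b, hbG⟩)
      (by simpa [Subgroup.mem_subgroupOf] using ha)
      (by simpa [Subgroup.mem_subgroupOf] using hb)
    simpa [Subgroup.mem_subgroupOf] using h
  have hGpN : ∀ a ∈ G, ∀ x ∈ Gp, a * x * a⁻¹ ∈ Gp := by
    intro a haG x hx
    have h := index_two_conj_mem hidx (a := (⟨a, haG⟩ : ↥G)) (x := ⟨x, hGpG hx⟩)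
      (by simpa [Subgroup.mem_subgroupOf] using hx)
    simpa [Subgroup.mem_subgroupOf] using h
  have hgiG : g⁻¹ ∈ G := G.inv_mem hgG
  have hginot : g⁻¹ ∉ Gp := fun h => hgnot (by simpa using Gp.inv_mem h)
  have hgsurj : ∀ w ∈ Δ', g⁻¹ w ∈ Δ := by
    intro w hw
    have hGv0 : g v₀ ∈ Δ' := (hgswap v₀).mp hv₀
    obtain ⟨b, hbGp, hb⟩ := htransΔ' (g v₀) hGv0 w hw
    have hmem : g⁻¹ * b * g ∈ Gp := by
      have := hGpN g⁻¹ hgiG b hbGp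
      rwa [inv_inv] at this
    have hx : (g⁻¹ * b * g) v₀ ∈ Δ := (hΔ _ hmem v₀).mp hv₀
    have he : (g⁻¹ * b * g) v₀ = g⁻¹ w := by
      simp only [Equiv.Perm.mul_apply]
      rw [hb]
    rwa [he] at hx
  have hgΔ'Δ : ∀ w ∈ Δ', g w ∈ Δ := by
    intro w hw
    rcases hcover (g w) with h | h
    · exact h
    · exfalso
      have hv := hgsurj (g w) h
      simp only [Equiv.Perm.inv_apply_self] at hv
      exact hdisj w hv hw
  have hcosetΔ : ∀ a, a ∈ G → a ∉ Gp → ∀ v ∈ Δ, a v ∈ Δ' := by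
    intro a haG ha v hv
    have hga : g⁻¹ * a ∈ Gp := hnn hgiG haG hginot ha
    have h1 : (g⁻¹ * a) v ∈ Δ := (hΔ _ hga v).mp hv
    have h2 : g ((g⁻¹ * a) v) ∈ Δ' := (hgswap _).mp h1
    simpa only [Equiv.Perm.mul_apply, Equiv.Perm.apply_inv_self] using h2
  have hcosetΔ' : ∀ a, a ∈ G → a ∉ Gp → ∀ v ∈ Δ', a v ∈ Δ := by
    intro a haG ha v hv
    have hga : g⁻¹ * a ∈ Gp := hnn hgiG haG hginot ha
    have h1 : (g⁻¹ * a) v ∈ Δ' := (hΔ' _ hga v).mp hv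
    have h2 : g ((g⁻¹ * a) v) ∈ Δ := hgΔ'Δ _ h1
    simpa only [Equiv.Perm.mul_apply, Equiv.Perm.apply_inv_self] using h2
  -- ======== Part B: Γ arc machinery ========
  have harc : ∃ a b : V, A a b := by
    have h := hconn v₀ w₀
    rcases Relation.ReflTransGen.cases_head h with he | ⟨c, hc, _⟩
    · exfalso
      exact hdisj v₀ hv₀ (by rw [he]; exact hw₀)
    · rcases hc with h1 | h1
      · exact ⟨_, _, h1⟩
      · exact ⟨_, _, h1⟩
  have houtΓ : ∀ v : V, ∃ w, A v w := by
    intro v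
    obtain ⟨a, b, hab⟩ := harc
    obtain ⟨γ, hγG, hγ⟩ := hvt a v
    exact ⟨γ b, hγ ▸ hAut γ hγG a b hab⟩
  have hinΓ : ∀ v : V, ∃ w, A w v := by
    intro v
    obtain ⟨a, b, hab⟩ := harc
    obtain ⟨γ, hγG, hγ⟩ := hvt b v
    exact ⟨γ a, hγ ▸ hAut γ hγG a b hab⟩
  have hextend : ∀ (t : ℕ) (p : Fin (t + 1) → V), IsArcSeq A t p →
      ∃ q : Fin (t + 2) → V, IsArcSeq A (t + 1) q ∧ ∀ i : Fin (t + 1), q i.castSucc = p i := by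
    intro t p hp
    obtain ⟨w, hw⟩ := houtΓ (p (Fin.last t))
    refine ⟨Fin.snoc p w, ?_, ?_⟩
    · intro i
      induction i using Fin.lastCases with
      | last =>
        rw [Fin.succ_last, Fin.snoc_castSucc, Fin.snoc_last]
        exact hw
      | cast j =>
        rw [Fin.succ_castSucc, Fin.snoc_castSucc, Fin.snoc_castSucc]
        exact hp j
    · intro i
      exact Fin.snoc_castSucc _ _ _
  have hatrans : ∀ t, t ≤ s → ArcTransitive A G t := by
    have key : ∀ d t, t + d = s → ArcTransitive A G t := by
      intro d
      induction d with
      | zero =>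
        intro t ht
        have he : t = s := by omega
        subst he
        exact hat
      | succ m ih =>
        intro t ht
        have h' := ih (t + 1) (by omega)
        intro p q hp hq
        obtain ⟨p', hp', hpe⟩ := hextend t p hp
        obtain ⟨q', hq', hqe⟩ := hextend t q hq
        obtain ⟨γ, hγG, hγ⟩ := h' p' q' hp' hq'
        refine ⟨γ, hγG, fun i => ?_⟩
        have hh := hγ i.castSucc
        rwa [hpe i, hqe i] at hh
    intro t ht
    exact key (s - t) t (by omega)
  -- ======== Part C: bipartite ========
  have hcrossing : ∃ x y, A x y ∧ ((x ∈ Δ ∧ y ∈ Δ') ∨ (x ∈ Δ' ∧ y ∈ Δ)) := by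
    have aux : ∀ a b : V, Relation.ReflTransGen (fun u v => A u v ∨ A v u) a b →
        a ∈ Δ → b ∈ Δ' → ∃ x y, A x y ∧ ((x ∈ Δ ∧ y ∈ Δ') ∨ (x ∈ Δ' ∧ y ∈ Δ)) := by
      intro a b h
      induction h with
      | refl => exact fun h1 h2 => (hdisj a h1 h2).elim
      | @tail c d hac hcd ih =>
        intro h1 h2
        rcases hcover c with hc | hc
        · rcases hcd with h' | h'
          · exact ⟨c, d, h', Or.inl ⟨hc, h2⟩⟩
          · exact ⟨d, c, h', Or.inr ⟨h2, hc⟩⟩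
        · exact ih h1 hc
    exact aux v₀ w₀ (hconn v₀ w₀) hv₀ hw₀
  have harc1 : ∀ u v x y : V, A u v → A x y → ∃ γ ∈ G, γ u = x ∧ γ v = y := by
    intro u v x y huv hxy
    have h1 : IsArcSeq A 1 ![u, v] := by
      intro i
      fin_cases i
      simpa using huv
    have h2 : IsArcSeq A 1 ![x, y] := by
      intro i
      fin_cases i
      simpa using hxy
    obtain ⟨γ, hγG, hγ⟩ := hatrans 1 (by omega) ![u, v] ![x, y] h1 h2
    refine ⟨γ, hγG, ?_, ?_⟩
    · simpa using hγ 0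
    · simpa using hγ 1
  have hsamepart : ∀ u v, A u v → (u ∈ Δ → v ∈ Δ → False) ∧ (u ∈ Δ' → v ∈ Δ' → False) := by
    intro u v huv
    obtain ⟨x, y, hxy, hcr⟩ := hcrossing
    constructor
    · intro h1 h2
      obtain ⟨γ, hγG, he1, he2⟩ := harc1 u v x y huv hxy
      by_cases hγp : γ ∈ Gp
      · have hx : x ∈ Δ := he1 ▸ (hΔ γ hγp u).mp h1
        have hy : y ∈ Δ := he2 ▸ (hΔ γ hγp v).mp h2
        rcases hcr with ⟨_, hy'⟩ | ⟨hx', _⟩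
        · exact hdisj y hy hy'
        · exact hdisj x hx hx'
      · have hx : x ∈ Δ' := he1 ▸ hcosetΔ γ hγG hγp u h1
        have hy : y ∈ Δ' := he2 ▸ hcosetΔ γ hγG hγp v h2
        rcases hcr with ⟨hx', _⟩ | ⟨_, hy'⟩
        · exact hdisj x hx' hx
        · exact hdisj y hy' hy
    · intro h1 h2
      obtain ⟨γ, hγG, he1, he2⟩ := harc1 u v x y huv hxy
      by_cases hγp : γ ∈ Gp
      · have hx : x ∈ Δ' := he1 ▸ (hΔ' γ hγp u).mp h1
        have hy : y ∈ Δ' := he2 ▸ (hΔ' γ hγp v).mp h2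
        rcases hcr with ⟨hx', _⟩ | ⟨_, hy'⟩
        · exact hdisj x hx' hx
        · exact hdisj y hy' hy
      · have hx : x ∈ Δ := he1 ▸ hcosetΔ' γ hγG hγp u h1
        have hy : y ∈ Δ := he2 ▸ hcosetΔ' γ hγG hγp v h2
        rcases hcr with ⟨_, hy'⟩ | ⟨hx', _⟩
        · exact hdisj y hy hy'
        · exact hdisj x hx hx'
  have hbip1 : ∀ u v, A u v → u ∈ Δ → v ∈ Δ' := by
    intro u v huv hu
    rcases hcover v with hv | hv
    · exact ((hsamepart u v huv).1 hu hv).elim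
    · exact hv
  have hbip2 : ∀ u v, A u v → u ∈ Δ' → v ∈ Δ := by
    intro u v huv hu
    rcases hcover v with hv | hv
    · exact hv
    · exact ((hsamepart u v huv).2 hu hv).elim
  -- ======== Part D: bipartite half ========
  have hHpres : ∀ h ∈ (inducedHom Δ Gp hΔ).range, ∀ x y : ↥Δ,
      subHalfArc A Δ Δ' x y → subHalfArc A Δ Δ' (h x) (h y) := by
    rintro h ⟨b, rfl⟩ x y ⟨v, hv, h1, h2⟩
    refine ⟨(b : Equiv.Perm V) v, (hΔ' b b.2 v).mp hv, ?_, ?_⟩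
    · exact hAut b (hGpG b.2) _ _ h1
    · exact hAut b (hGpG b.2) _ _ h2
  have hBout : ∀ x : ↥Δ, ∃ y, subHalfArc A Δ Δ' x y := by
    intro x
    obtain ⟨v, hv⟩ := houtΓ ↑x
    have hv' : v ∈ Δ' := hbip1 _ _ hv x.2
    obtain ⟨w, hw⟩ := houtΓ v
    have hw' : w ∈ Δ := hbip2 _ _ hw hv'
    exact ⟨⟨w, hw'⟩, v, hv', hv, hw⟩
  have hBin : ∀ x : ↥Δ, ∃ y, subHalfArc A Δ Δ' y x := by
    intro x
    obtain ⟨v, hv⟩ := hinΓ ↑x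
    have hv' : v ∈ Δ' := by
      rcases hcover v with h | h
      · exact ((hsamepart v ↑x hv).1 h x.2).elim
      · exact h
    obtain ⟨w, hw⟩ := hinΓ v
    have hw' : w ∈ Δ := by
      rcases hcover w with h | h
      · exact h
      · exact ((hsamepart w v hw).2 h hv').elim
    exact ⟨⟨w, hw'⟩, v, hv', hw, hv⟩
  have hBconn : ∀ x y : ↥Δ, Relation.ReflTransGen
      (fun a b => subHalfArc A Δ Δ' a b ∨ subHalfArc A Δ Δ' b a) x y := by
    have hanch : ∀ v : V, ∃ x : ↥Δ, (v ∈ Δ → ↑x = v) ∧ (v ∈ Δ' → A v ↑x) := by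
      intro v
      rcases hcover v with h | h
      · exact ⟨⟨v, h⟩, fun _ => rfl, fun h' => (hdisj v h h').elim⟩
      · obtain ⟨w, hw⟩ := houtΓ v
        have hw' : w ∈ Δ := hbip2 _ _ hw h
        exact ⟨⟨w, hw'⟩, fun h' => (hdisj v h' h).elim, fun _ => hw⟩
    choose anch hanch1 hanch2 using hanch
    have hone : ∀ a b : V, A a b → Relation.ReflTransGen
        (fun x y => subHalfArc A Δ Δ' x y ∨ subHalfArc A Δ Δ' y x) (anch a) (anch b) := by
      intro a b hab
      rcases hcover a with ha | ha
      · have hb : b ∈ Δ' := hbip1 _ _ hab ha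
        have h1 : subHalfArc A Δ Δ' (anch a) (anch b) := by
          refine ⟨b, hb, ?_, hanch2 b hb⟩
          rw [hanch1 a ha]
          exact hab
        exact Relation.ReflTransGen.single (Or.inl h1)
      · have hb : b ∈ Δ := hbip2 _ _ hab ha
        obtain ⟨z, hz⟩ := hinΓ a
        have hzΔ : z ∈ Δ := by
          rcases hcover z with h | h
          · exact h
          · exact ((hsamepart z a hz).2 h ha).elim
        have h1 : subHalfArc A Δ Δ' ⟨z, hzΔ⟩ (anch b) := by
          refine ⟨a, ha, hz, ?_⟩
          rw [hanch1 b hb]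
          exact hab
        have h2 : subHalfArc A Δ Δ' ⟨z, hzΔ⟩ (anch a) := ⟨a, ha, hz, hanch2 a ha⟩
        exact Relation.ReflTransGen.head (Or.inr h2) (Relation.ReflTransGen.single (Or.inl h1))
    have hstep : ∀ a b : V, (A a b ∨ A b a) → Relation.ReflTransGen
        (fun x y => subHalfArc A Δ Δ' x y ∨ subHalfArc A Δ Δ' y x) (anch a) (anch b) := by
      have hsymRTG : ∀ x y : ↥Δ, Relation.ReflTransGen
          (fun a b => subHalfArc A Δ Δ' a b ∨ subHalfArc A Δ Δ' b a) x y →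
          Relation.ReflTransGen
          (fun a b => subHalfArc A Δ Δ' a b ∨ subHalfArc A Δ Δ' b a) y x := by
        intro x y h
        induction h with
        | refl => exact Relation.ReflTransGen.refl
        | tail hxy step ih => exact Relation.ReflTransGen.head step.symm ih
      intro a b hab
      rcases hab with h | h
      · exact hone a b h
      · exact hsymRTG _ _ (hone b a h)
    have hmain : ∀ a b : V, Relation.ReflTransGen (fun u v => A u v ∨ A v u) a b →
        Relation.ReflTransGen
        (fun x y => subHalfArc A Δ Δ' x y ∨ subHalfArc A Δ Δ' y x) (anch a) (anch b) := by
      intro a b h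
      induction h with
      | refl => exact Relation.ReflTransGen.refl
      | @tail c d hac hcd ih => exact ih.trans (hstep c d hcd)
    intro x y
    have h := hmain ↑x ↑y (hconn ↑x ↑y)
    have e1 : anch ↑x = x := Subtype.ext (hanch1 ↑x x.2)
    have e2 : anch ↑y = y := Subtype.ext (hanch1 ↑y y.2)
    rwa [e1, e2] at h
  have hHt : ∀ t, 2 * t ≤ s → ∀ p q : Fin (t + 1) → ↥Δ,
      IsArcSeq (subHalfArc A Δ Δ') t p → IsArcSeq (subHalfArc A Δ Δ') t q →
      ∃ b : ↥Gp, ∀ i, (inducedHom Δ Gp hΔ b) (p i) = q i := by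
    intro t ht p q hp hq
    have hwit : ∀ (x : Fin (t+1) → ↥Δ), IsArcSeq (subHalfArc A Δ Δ') t x →
        ∃ w : Fin t → V, ∀ i : Fin t, w i ∈ Δ' ∧ A ↑(x i.castSucc) (w i) ∧ A (w i) ↑(x i.succ) := by
      intro x hx
      choose w h1 h2 h3 using fun i : Fin t => hx i
      exact ⟨w, fun i => ⟨h1 i, h2 i, h3 i⟩⟩
    obtain ⟨w, hw⟩ := hwit p hp
    obtain ⟨w', hw'⟩ := hwit q hq
    have hinter : ∀ (x : Fin (t+1) → ↥Δ) (u : Fin t → V),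
        (∀ i : Fin t, u i ∈ Δ' ∧ A ↑(x i.castSucc) (u i) ∧ A (u i) ↑(x i.succ)) →
        ∃ P : Fin (2*t+1) → V, IsArcSeq A (2*t) P ∧
          (∀ (j : Fin (2*t+1)) (k : Fin (t+1)), (j : ℕ) = 2 * (k : ℕ) → P j = ↑(x k)) := by
      intro x u hu
      refine ⟨fun j => if h2 : (j : ℕ) % 2 = 0
          then ↑(x ⟨(j : ℕ)/2, by have := j.isLt; omega⟩)
          else ↑(u ⟨(j : ℕ)/2, by have := j.isLt; omega⟩), ?_, ?_⟩
      · intro i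
        dsimp only
        have hi := i.isLt
        have hc : ((i.castSucc : Fin (2*t+1)) : ℕ) = (i : ℕ) := rfl
        have hsc : ((i.succ : Fin (2*t+1)) : ℕ) = (i : ℕ) + 1 := rfl
        by_cases hpar : (i : ℕ) % 2 = 0
        · rw [dif_pos (by omega : ((i.castSucc : Fin (2*t+1)) : ℕ) % 2 = 0),
             dif_neg (by omega : ¬ ((i.succ : Fin (2*t+1)) : ℕ) % 2 = 0)]
          have hk : (⟨((i.castSucc : Fin (2*t+1)) : ℕ)/2, by have := i.isLt; omega⟩ : Fin (t+1))
              = (⟨(i : ℕ)/2, by omega⟩ : Fin t).castSucc := by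
            apply Fin.ext
            simp only [Fin.coe_castSucc]
          have hk2 : (⟨((i.succ : Fin (2*t+1)) : ℕ)/2, by have := i.isLt; omega⟩ : Fin t)
              = (⟨(i : ℕ)/2, by omega⟩ : Fin t) := by
            apply Fin.ext
            show ((i : ℕ) + 1)/2 = (i : ℕ)/2
            omega
          rw [hk, hk2]
          exact (hu _).2.1
        · rw [dif_neg (by omega : ¬ ((i.castSucc : Fin (2*t+1)) : ℕ) % 2 = 0),
             dif_pos (by omega : ((i.succ : Fin (2*t+1)) : ℕ) % 2 = 0)]
          have hk : (⟨((i.castSucc : Fin (2*t+1)) : ℕ)/2, by have := i.isLt; omega⟩ : Fin t)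
              = (⟨(i : ℕ)/2, by omega⟩ : Fin t) := by
            apply Fin.ext
            rfl
          have hk2 : (⟨((i.succ : Fin (2*t+1)) : ℕ)/2, by have := i.isLt; omega⟩ : Fin (t+1))
              = (⟨(i : ℕ)/2, by omega⟩ : Fin t).succ := by
            apply Fin.ext
            show ((i : ℕ) + 1)/2 = (i : ℕ)/2 + 1
            omega
          rw [hk, hk2]
          exact (hu _).2.2
      · intro j k hjk
        dsimp only
        rw [dif_pos (by omega : (j : ℕ) % 2 = 0)]
        have hk : (⟨(j : ℕ)/2, by have := j.isLt; omega⟩ : Fin (t+1)) = k := by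
          apply Fin.ext
          show (j : ℕ)/2 = (k : ℕ)
          omega
        rw [hk]
    obtain ⟨P, hPseq, hPev⟩ := hinter p w hw
    obtain ⟨Q, hQseq, hQev⟩ := hinter q w' hw'
    obtain ⟨γ, hγG, hγ⟩ := hatrans (2*t) ht P Q hPseq hQseq
    have hp0 : P ⟨0, by omega⟩ = ↑(p 0) := hPev ⟨0, by omega⟩ 0 (by simp)
    have hq0 : Q ⟨0, by omega⟩ = ↑(q 0) := hQev ⟨0, by omega⟩ 0 (by simp)
    have hγp : γ ∈ Gp := by
      by_contra hno
      have h0 := hγ ⟨0, by omega⟩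
      rw [hp0, hq0] at h0
      have hbad : γ ↑(p 0) ∈ Δ' := hcosetΔ γ hγG hno _ (p 0).2
      rw [h0] at hbad
      exact hdisj _ (q 0).2 hbad
    refine ⟨⟨γ, hγp⟩, fun i => ?_⟩
    apply Subtype.ext
    have hbnd : 2 * (i : ℕ) < 2*t + 1 := by have := i.isLt; omega
    have hPe : P ⟨2*(i : ℕ), hbnd⟩ = ↑(p i) := hPev _ i rfl
    have hQe : Q ⟨2*(i : ℕ), hbnd⟩ = ↑(q i) := hQev _ i rfl
    have hh := hγ ⟨2*(i : ℕ), hbnd⟩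
    rw [hPe, hQe] at hh
    exact hh
  -- ======== Part E: subgroup theory ========
  have hRleH : R ≤ ((inducedHom Δ Gp hΔ).range) := hRmin.1.1
  have hRnorm : ∀ h ∈ ((inducedHom Δ Gp hΔ).range), ∀ r ∈ R, h * r * h⁻¹ ∈ R := hRmin.1.2
  have hRne : R ≠ ⊥ := hRmin.2.1
  have hRmin3 := hRmin.2.2
  have hRφmem : ∀ y, y ∈ Rφ ↔ ∃ rr : ↥((inducedHom Δ Gp hΔ).range), ↑rr ∈ R ∧ ↑(φ rr) = y := by
    intro y
    rw [hRφ]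
    constructor
    · rintro ⟨z, hz, rfl⟩
      obtain ⟨rr, hrr, rfl⟩ := Subgroup.mem_map.mp hz
      exact ⟨rr, Subgroup.mem_subgroupOf.mp hrr, rfl⟩
    · rintro ⟨rr, hrr, rfl⟩
      exact ⟨φ rr, Subgroup.mem_map.mpr ⟨rr, Subgroup.mem_subgroupOf.mpr hrr, rfl⟩, rfl⟩
  have hRφleH : Rφ ≤ ((inducedHom Δ Gp hΔ).range) := by rw [hRφ]; exact Subgroup.map_subtype_le _
  have hcardRφ : Nat.card Rφ = Nat.card R := by
    rw [hRφ]
    have e1 := Subgroup.subgroupOfEquivOfLe hRleH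
    have e2 := MulEquiv.subgroupMap φ (R.subgroupOf ((inducedHom Δ Gp hΔ).range))
    have e3 := Subgroup.equivMapOfInjective (Subgroup.map φ.toMonoidHom (R.subgroupOf ((inducedHom Δ Gp hΔ).range)))
      ((inducedHom Δ Gp hΔ).range).subtype (Subgroup.subtype_injective ((inducedHom Δ Gp hΔ).range))
    calc Nat.card (Subgroup.map ((inducedHom Δ Gp hΔ).range).subtype (Subgroup.map φ.toMonoidHom (R.subgroupOf ((inducedHom Δ Gp hΔ).range))))
        = Nat.card (Subgroup.map φ.toMonoidHom (R.subgroupOf ((inducedHom Δ Gp hΔ).range))) :=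
          (Nat.card_congr e3.toEquiv).symm
      _ = Nat.card (R.subgroupOf ((inducedHom Δ Gp hΔ).range)) := (Nat.card_congr e2.toEquiv).symm
      _ = Nat.card R := Nat.card_congr e1.toEquiv
  have hRφnorm : ∀ h ∈ ((inducedHom Δ Gp hΔ).range), ∀ y ∈ Rφ, h * y * h⁻¹ ∈ Rφ := by
    intro h hh y hy
    obtain ⟨rr, hrr, rfl⟩ := (hRφmem y).mp hy
    refine (hRφmem _).mpr ⟨φ.symm ⟨h, hh⟩ * rr * (φ.symm ⟨h, hh⟩)⁻¹, ?_, ?_⟩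
    · have := hRnorm _ (φ.symm ⟨h, hh⟩).2 _ hrr
      simpa using this
    · rw [map_mul, map_mul, map_inv, MulEquiv.apply_symm_apply]
      simp
  have hRRφbot : R ⊓ Rφ = ⊥ := by
    by_contra hne
    have hnorm : NormalIn (R ⊓ Rφ) ((inducedHom Δ Gp hΔ).range) :=
      ⟨le_trans inf_le_left hRleH, fun h hh x hx => by
        have hx' := Subgroup.mem_inf.mp hx
        exact Subgroup.mem_inf.mpr ⟨hRnorm h hh x hx'.1, hRφnorm h hh x hx'.2⟩⟩
    have heq := hRmin3 (R ⊓ Rφ) hnorm hne inf_le_left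
    have hle : R ≤ Rφ := by rw [← heq]; exact inf_le_right
    have hset : (R : Set (Equiv.Perm ↥Δ)) = (Rφ : Set (Equiv.Perm ↥Δ)) := by
      apply Set.eq_of_subset_of_ncard_le hle
      rw [← Nat.card_coe_set_eq, ← Nat.card_coe_set_eq]
      exact le_of_eq hcardRφ
    exact hRφne (SetLike.coe_injective hset.symm)
  have hcommRRφ : ∀ r ∈ R, ∀ y ∈ Rφ, r * y = y * r := by
    intro r hr y hy
    have h1 : r * y * r⁻¹ * y⁻¹ ∈ R ⊓ Rφ := by
      refine Subgroup.mem_inf.mpr ⟨?_, ?_⟩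
      · have h2 := hRnorm y (hRφleH hy) r⁻¹ (R.inv_mem hr)
        have h3 : r * (y * r⁻¹ * y⁻¹) ∈ R := R.mul_mem hr h2
        rwa [show r * (y * r⁻¹ * y⁻¹) = r * y * r⁻¹ * y⁻¹ by group] at h3
      · have h2 := hRφnorm r (hRleH hr) y hy
        exact Rφ.mul_mem h2 (Rφ.inv_mem hy)
    rw [hRRφbot, Subgroup.mem_bot] at h1
    have h1' : ⁅r, y⁆ = 1 := by rw [commutatorElement_def]; exact h1
    exact (commutatorElement_eq_one_iff_commute.mp h1').eq
  have hRφleC : Rφ ≤ C := by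
    intro y hy
    rw [hC]
    refine Subgroup.mem_inf.mpr ⟨hRφleH hy, ?_⟩
    rw [Subgroup.mem_centralizer_iff]
    intro r hr
    exact hcommRRφ r hr y hy
  have hCleH : C ≤ ((inducedHom Δ Gp hΔ).range) := by rw [hC]; exact inf_le_left
  have hCcent : ∀ c ∈ C, ∀ r ∈ R, r * c = c * r := by
    intro c hc r hr
    rw [hC] at hc
    exact Subgroup.mem_centralizer_iff.mp (Subgroup.mem_inf.mp hc).2 r hr
  have hCnorm : ∀ h ∈ ((inducedHom Δ Gp hΔ).range), ∀ c ∈ C, h * c * h⁻¹ ∈ C := by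
    intro h hh c hc
    rw [hC]
    refine Subgroup.mem_inf.mpr
      ⟨((inducedHom Δ Gp hΔ).range).mul_mem (((inducedHom Δ Gp hΔ).range).mul_mem hh (hCleH hc)) (((inducedHom Δ Gp hΔ).range).inv_mem hh), ?_⟩
    rw [Subgroup.mem_centralizer_iff]
    intro r hr
    have h1 : h⁻¹ * r * h ∈ R := by
      have := hRnorm h⁻¹ (((inducedHom Δ Gp hΔ).range).inv_mem hh) r hr
      rwa [inv_inv] at this
    have h2 := hCcent c hc _ h1
    calc r * (h * c * h⁻¹) = h * ((h⁻¹ * r * h) * c) * h⁻¹ := by group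
      _ = h * (c * (h⁻¹ * r * h)) * h⁻¹ := by rw [h2]
      _ = (h * c * h⁻¹) * r := by group
  -- ======== Part E2: transport and M ========
  have hconjA : ∀ b : ↥Gp, ∃ b' : ↥Gp, (↑b' : Equiv.Perm V) = g⁻¹ * ↑b * g ∧
      (inducedHom Δ Gp hΔ) b' = ↑(φ ⟨(inducedHom Δ Gp hΔ) b, ⟨b, rfl⟩⟩) := by
    intro b
    have hmem : g⁻¹ * ↑b * g ∈ Gp := by
      have := hGpN g⁻¹ hgiG ↑b b.2
      rwa [inv_inv] at this
    refine ⟨⟨g⁻¹ * ↑b * g, hmem⟩, rfl, ?_⟩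
    have he : (inducedHom Δ Gp hΔ) ⟨g⁻¹ * ↑b * g, hmem⟩ = conjHom Δ Δ' Gp g hΔ' hgswap b := rfl
    rw [he, hdiag b]
  have hconjB : ∀ b : ↥Gp, ∃ b' : ↥Gp, (↑b' : Equiv.Perm V) = g * ↑b * g⁻¹ ∧
      (inducedHom Δ Gp hΔ) b = ↑(φ ⟨(inducedHom Δ Gp hΔ) b', ⟨b', rfl⟩⟩) := by
    intro b
    have hmem : g * ↑b * g⁻¹ ∈ Gp := hGpN g hgG ↑b b.2
    refine ⟨⟨g * ↑b * g⁻¹, hmem⟩, rfl, ?_⟩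
    have he : conjHom Δ Δ' Gp g hΔ' hgswap ⟨g * ↑b * g⁻¹, hmem⟩ = (inducedHom Δ Gp hΔ) b := by
      apply Equiv.ext
      intro x
      apply Subtype.ext
      show (g⁻¹ * (g * ↑b * g⁻¹) * g) ↑x = (↑b : Equiv.Perm V) ↑x
      rw [show g⁻¹ * (g * ↑b * g⁻¹) * g = (↑b : Equiv.Perm V) by group]
    rw [← he, hdiag ⟨g * ↑b * g⁻¹, hmem⟩]
  have hmemN : ∀ b : ↥Gp, ((↑b : Equiv.Perm V) ∈ N ↔ (inducedHom Δ Gp hΔ) b ∈ M) := by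
    intro b
    rw [hN]
    constructor
    · rintro ⟨b', hb', hb'e⟩
      have : b' = b := Subtype.ext hb'e
      subst this
      exact Subgroup.mem_comap.mp hb'
    · intro hm
      exact ⟨b, Subgroup.mem_comap.mpr hm, rfl⟩
  have hNnorm : ∀ a ∈ G, ∀ x ∈ N, a * x * a⁻¹ ∈ N := hNmin.1.2
  have hphiM : ∀ hh0 : ↥((inducedHom Δ Gp hΔ).range), ↑hh0 ∈ M → ↑(φ hh0) ∈ M := by
    intro hh0 hm
    obtain ⟨b, hb⟩ := MonoidHom.mem_range.mp hh0.2
    have hbN : (↑b : Equiv.Perm V) ∈ N := (hmemN b).mpr (by rw [hb]; exact hm)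
    have hconjN : g⁻¹ * ↑b * g ∈ N := by
      have := hNnorm g⁻¹ hgiG ↑b hbN
      rwa [inv_inv] at this
    obtain ⟨b', hb'perm, hb'iota⟩ := hconjA b
    have hb'N : (↑b' : Equiv.Perm V) ∈ N := by rw [hb'perm]; exact hconjN
    have hb'M : (inducedHom Δ Gp hΔ) b' ∈ M := (hmemN b').mp hb'N
    have hbe : (⟨(inducedHom Δ Gp hΔ) b, ⟨b, rfl⟩⟩ : ↥((inducedHom Δ Gp hΔ).range)) = hh0 := Subtype.ext hb
    rw [← hbe]
    rw [← hb'iota]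
    exact hb'M
  have hphiMsymm : ∀ hh0 : ↥((inducedHom Δ Gp hΔ).range), ↑hh0 ∈ M → ↑(φ.symm hh0) ∈ M := by
    intro hh0 hm
    obtain ⟨b', hb'⟩ := MonoidHom.mem_range.mp (φ.symm hh0).2
    obtain ⟨b2, hb2perm, hb2ι⟩ := hconjA b'
    have hbe : (⟨(inducedHom Δ Gp hΔ) b', ⟨b', rfl⟩⟩ : ↥((inducedHom Δ Gp hΔ).range)) = φ.symm hh0 := Subtype.ext hb'
    rw [hbe] at hb2ι
    rw [MulEquiv.apply_symm_apply] at hb2ι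
    have hb2M : (inducedHom Δ Gp hΔ) b2 ∈ M := by rw [hb2ι]; exact hm
    have hb2N : (↑b2 : Equiv.Perm V) ∈ N := (hmemN b2).mpr hb2M
    have hconjN : g * ↑b2 * g⁻¹ ∈ N := hNnorm g hgG ↑b2 hb2N
    have : (↑b' : Equiv.Perm V) ∈ N := by
      rw [show (↑b' : Equiv.Perm V) = g * (g⁻¹ * ↑b' * g) * g⁻¹ by group]
      rw [← hb2perm]
      exact hconjN
    have := (hmemN b').mp this
    rw [hb'] at this
    exact this
  have hMleH : M ≤ ((inducedHom Δ Gp hΔ).range) := by rw [hM]; exact sup_le hRleH hRφleH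
  have hMdec : ∀ m ∈ M, ∃ r ∈ R, ∃ y ∈ Rφ, m = r * y := by
    intro m hm
    rw [hM, Subgroup.sup_eq_closure] at hm
    induction hm using Subgroup.closure_induction with
    | mem x hx =>
      rcases hx with hx | hx
      · exact ⟨x, hx, 1, one_mem _, by group⟩
      · exact ⟨1, one_mem _, x, hx, by group⟩
    | one => exact ⟨1, one_mem _, 1, one_mem _, by group⟩
    | mul x y hx hy ihx ihy =>
      obtain ⟨r1, hr1, y1, hy1, rfl⟩ := ihx
      obtain ⟨r2, hr2, y2, hy2, rfl⟩ := ihy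
      refine ⟨r1 * r2, R.mul_mem hr1 hr2, y1 * y2, Rφ.mul_mem hy1 hy2, ?_⟩
      have hc := hcommRRφ r2 hr2 y1 hy1
      calc r1 * y1 * (r2 * y2) = r1 * (y1 * r2) * y2 := by group
        _ = r1 * (r2 * y1) * y2 := by rw [← hc]
        _ = r1 * r2 * (y1 * y2) := by group
    | inv x hx ihx =>
      obtain ⟨r1, hr1, y1, hy1, rfl⟩ := ihx
      refine ⟨r1⁻¹, R.inv_mem hr1, y1⁻¹, Rφ.inv_mem hy1, ?_⟩
      have hc := hcommRRφ r1⁻¹ (R.inv_mem hr1) y1⁻¹ (Rφ.inv_mem hy1)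
      rw [mul_inv_rev, ← hc]
  have hMnorm : ∀ h ∈ ((inducedHom Δ Gp hΔ).range), ∀ m ∈ M, h * m * h⁻¹ ∈ M := by
    intro h hh m hm
    obtain ⟨r, hr, y, hy, rfl⟩ := hMdec m hm
    have e : h * (r * y) * h⁻¹ = (h * r * h⁻¹) * (h * y * h⁻¹) := by group
    rw [e, hM]
    exact Subgroup.mul_mem _ (le_sup_left (a := R) (b := Rφ) (hRnorm h hh r hr))
      (le_sup_right (a := R) (b := Rφ) (hRφnorm h hh y hy))
  -- ======== Part F: no regular normal subgroup ========
  have hNoReg : ∀ X : Subgroup (Equiv.Perm ↥Δ), X ≤ ((inducedHom Δ Gp hΔ).range) →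
      (∀ h ∈ ((inducedHom Δ Gp hΔ).range), ∀ x ∈ X, h * x * h⁻¹ ∈ X) →
      (∀ x y : ↥Δ, ∃ a ∈ X, a x = y) →
      (∀ a ∈ X, ∀ u : ↥Δ, a u = u → a = 1) → False := by
    intro X hXle hXnorm hXtrans hXsemi
    have hdeg1 : ∀ (v w w' : ↥Δ), subHalfArc A Δ Δ' v w → subHalfArc A Δ Δ' v w' → w = w' := by
      intro v w w' h1 h2
      obtain ⟨u, hu⟩ := hBin v
      obtain ⟨c, hcX, hc⟩ := hXtrans u v
      have hBc : subHalfArc A Δ Δ' v (c v) := by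
        have := hHpres c (hXle hcX) u v hu
        rwa [hc] at this
      suffices hS : ∀ z, subHalfArc A Δ Δ' v z → z = c v by rw [hS w h1, hS w' h2]
      intro z hz
      have harcs1 : IsArcSeq (subHalfArc A Δ Δ') 2 ![u, v, c v] := by
        intro i
        fin_cases i
        · simpa using hu
        · simpa using hBc
      have harcs2 : IsArcSeq (subHalfArc A Δ Δ') 2 ![u, v, z] := by
        intro i
        fin_cases i
        · simpa using hu
        · simpa using hz
      obtain ⟨b, hb⟩ := hHt 2 (by omega) ![u, v, c v] ![u, v, z] harcs1 harcs2
      have hb0 : ((inducedHom Δ Gp hΔ) b) u = u := by simpa using hb 0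
      have hb1 : ((inducedHom Δ Gp hΔ) b) v = v := by simpa using hb 1
      have hb2 : ((inducedHom Δ Gp hΔ) b) (c v) = z := by simpa using hb 2
      have hbH : (inducedHom Δ Gp hΔ) b ∈ ((inducedHom Δ Gp hΔ).range) := ⟨b, rfl⟩
      have hdX : ((inducedHom Δ Gp hΔ) b) * c * ((inducedHom Δ Gp hΔ) b)⁻¹ ∈ X := hXnorm _ hbH c hcX
      have hfix : (c⁻¹ * (((inducedHom Δ Gp hΔ) b) * c * ((inducedHom Δ Gp hΔ) b)⁻¹)) u = u := by
        have hbinv : ((inducedHom Δ Gp hΔ) b)⁻¹ u = u := by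
          conv_lhs => rw [← hb0]
          exact Equiv.Perm.inv_apply_self _ _
        simp only [Equiv.Perm.mul_apply]
        rw [hbinv, hc, hb1, ← hc]
        exact Equiv.Perm.inv_apply_self _ _
      have h1' : c⁻¹ * (((inducedHom Δ Gp hΔ) b) * c * ((inducedHom Δ Gp hΔ) b)⁻¹) = 1 :=
        hXsemi _ (X.mul_mem (X.inv_mem hcX) hdX) u hfix
      have hD : c = ((inducedHom Δ Gp hΔ) b) * c * ((inducedHom Δ Gp hΔ) b)⁻¹ := inv_mul_eq_one.mp h1'
      have hcomm : ((inducedHom Δ Gp hΔ) b) * c = c * ((inducedHom Δ Gp hΔ) b) := by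
        calc ((inducedHom Δ Gp hΔ) b) * c = (((inducedHom Δ Gp hΔ) b) * c * ((inducedHom Δ Gp hΔ) b)⁻¹) * ((inducedHom Δ Gp hΔ) b) := by group
          _ = c * ((inducedHom Δ Gp hΔ) b) := by rw [← hD]
      rw [← hb2]
      calc ((inducedHom Δ Gp hΔ) b) (c v) = (((inducedHom Δ Gp hΔ) b) * c) v := rfl
        _ = (c * ((inducedHom Δ Gp hΔ) b)) v := by rw [hcomm]
        _ = c (((inducedHom Δ Gp hΔ) b) v) := rfl
        _ = c v := by rw [hb1]
    haveI : Nonempty ↥Δ := ⟨u₀⟩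
    obtain ⟨σ, hσ, hpow⟩ := outdeg_one_powers (subHalfArc A Δ Δ') hBconn hBout hBin hdeg1
    have hHz : ∀ h ∈ ((inducedHom Δ Gp hΔ).range), h ∈ Subgroup.zpowers σ := by
      intro h hh
      obtain ⟨k, hk⟩ := hpow h (fun a b hab => hHpres h hh a b hab)
      exact Subgroup.mem_zpowers_iff.mpr ⟨k, hk.symm⟩
    have hRz : R ≤ Subgroup.zpowers σ := fun r hr => hHz r (hRleH hr)
    have hRφz : Rφ ≤ Subgroup.zpowers σ := fun y hy => hHz y (hRφleH hy)
    exact hRφne (zpowers_subgroup_card_eq σ Rφ R hRφz hRz hcardRφ)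
  -- ======== Part G: R is nonabelian and perfect ========
  have hRnonab : ∃ r1 ∈ R, ∃ r2 ∈ R, r1 * r2 ≠ r2 * r1 := by
    by_contra hab
    push_neg at hab
    have hRφab : ∀ y1 ∈ Rφ, ∀ y2 ∈ Rφ, y1 * y2 = y2 * y1 := by
      intro y1 hy1 y2 hy2
      obtain ⟨rr1, hrr1, rfl⟩ := (hRφmem y1).mp hy1
      obtain ⟨rr2, hrr2, rfl⟩ := (hRφmem y2).mp hy2
      have he : rr1 * rr2 = rr2 * rr1 := Subtype.ext (hab _ hrr1 _ hrr2)
      have he2 : φ (rr1 * rr2) = φ (rr2 * rr1) := by rw [he]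
      have e2 := congrArg (fun z : ↥((inducedHom Δ Gp hΔ).range) => (z : Equiv.Perm ↥Δ)) he2
      simpa [map_mul] using e2
    have hMab : ∀ m1 ∈ M, ∀ m2 ∈ M, m1 * m2 = m2 * m1 := by
      intro m1 hm1 m2 hm2
      obtain ⟨r1, hr1, y1, hy1, rfl⟩ := hMdec m1 hm1
      obtain ⟨r2, hr2, y2, hy2, rfl⟩ := hMdec m2 hm2
      have c1 := hab r1 hr1 r2 hr2
      have c2 := hRφab y1 hy1 y2 hy2
      have c3 := hcommRRφ r2 hr2 y1 hy1
      have c4 := hcommRRφ r1 hr1 y2 hy2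
      calc r1 * y1 * (r2 * y2) = r1 * (y1 * r2) * y2 := by group
        _ = r1 * (r2 * y1) * y2 := by rw [← c3]
        _ = (r1 * r2) * (y1 * y2) := by group
        _ = (r2 * r1) * (y2 * y1) := by rw [c1, c2]
        _ = r2 * (r1 * y2) * y1 := by group
        _ = r2 * (y2 * r1) * y1 := by rw [c4]
        _ = r2 * y2 * (r1 * y1) := by group
    apply hNoReg M hMleH hMnorm hMtrans
    intro a ha u hau
    apply Equiv.ext
    intro v
    simp only [Equiv.Perm.one_apply]
    obtain ⟨m, hm, hmv⟩ := hMtrans u v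
    have hcm := hMab a ha m hm
    calc a v = a (m u) := by rw [hmv]
      _ = (a * m) u := rfl
      _ = (m * a) u := by rw [hcm]
      _ = m (a u) := rfl
      _ = m u := by rw [hau]
      _ = v := hmv
  have hRperf : ⁅R, R⁆ = R := by
    have hle : ⁅R, R⁆ ≤ R := by
      rw [Subgroup.commutator_le]
      intro g1 h1 g2 h2
      rw [commutatorElement_def]
      exact R.mul_mem (R.mul_mem (R.mul_mem h1 h2) (R.inv_mem h1)) (R.inv_mem h2)
    have hconj : ∀ h ∈ ((inducedHom Δ Gp hΔ).range), ∀ x ∈ ⁅R, R⁆, h * x * h⁻¹ ∈ ⁅R, R⁆ := by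
      intro h hh x hx
      rw [Subgroup.commutator_def] at hx
      induction hx using Subgroup.closure_induction with
      | mem y hy =>
        obtain ⟨g1, hg1, g2, hg2, rfl⟩ := hy
        have e : h * ⁅g1, g2⁆ * h⁻¹ = ⁅h * g1 * h⁻¹, h * g2 * h⁻¹⁆ := by
          simp only [commutatorElement_def]
          group
        rw [e]
        exact Subgroup.commutator_mem_commutator (hRnorm h hh g1 hg1) (hRnorm h hh g2 hg2)
      | one => simpa using Subgroup.one_mem _
      | mul a b ha hb iha ihb =>
        have e : h * (a * b) * h⁻¹ = (h * a * h⁻¹) * (h * b * h⁻¹) := by group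
        rw [e]
        exact Subgroup.mul_mem _ iha ihb
      | inv a ha iha =>
        have e : h * a⁻¹ * h⁻¹ = (h * a * h⁻¹)⁻¹ := by group
        rw [e]
        exact Subgroup.inv_mem _ iha
    have hne : ⁅R, R⁆ ≠ ⊥ := by
      obtain ⟨r1, hr1, r2, hr2, hne12⟩ := hRnonab
      intro hbot
      have hmem : ⁅r1, r2⁆ ∈ ⁅R, R⁆ := Subgroup.commutator_mem_commutator hr1 hr2
      rw [hbot, Subgroup.mem_bot] at hmem
      exact hne12 (commutatorElement_eq_one_iff_commute.mp hmem).eq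
    exact hRmin3 _ ⟨le_trans hle hRleH, hconj⟩ hne hle
  -- ======== Part ((inducedHom Δ Gp hΔ).range): centralizer of M is trivial ========
  have hWtriv : ∀ w ∈ ((inducedHom Δ Gp hΔ).range) ⊓ Subgroup.centralizer (M : Set (Equiv.Perm ↥Δ)), w = 1 := by
    set SW := ((inducedHom Δ Gp hΔ).range) ⊓ Subgroup.centralizer (M : Set (Equiv.Perm ↥Δ)) with hSWdef
    have hSWleH : SW ≤ ((inducedHom Δ Gp hΔ).range) := inf_le_left
    have hSWcent : ∀ w ∈ SW, ∀ m ∈ M, m * w = w * m := by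
      intro w hw m hm
      rw [hSWdef] at hw
      exact Subgroup.mem_centralizer_iff.mp (Subgroup.mem_inf.mp hw).2 m hm
    have hSWnorm : ∀ h ∈ ((inducedHom Δ Gp hΔ).range), ∀ w ∈ SW, h * w * h⁻¹ ∈ SW := by
      intro h hh w hw
      rw [hSWdef]
      refine Subgroup.mem_inf.mpr
        ⟨((inducedHom Δ Gp hΔ).range).mul_mem (((inducedHom Δ Gp hΔ).range).mul_mem hh (hSWleH hw)) (((inducedHom Δ Gp hΔ).range).inv_mem hh), ?_⟩
      rw [Subgroup.mem_centralizer_iff]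
      intro m hm
      have h1 : h⁻¹ * m * h ∈ M := by
        have := hMnorm h⁻¹ (((inducedHom Δ Gp hΔ).range).inv_mem hh) m hm
        rwa [inv_inv] at this
      have h2 := hSWcent w hw _ h1
      calc m * (h * w * h⁻¹) = h * ((h⁻¹ * m * h) * w) * h⁻¹ := by group
        _ = h * (w * (h⁻¹ * m * h)) * h⁻¹ := by rw [h2]
        _ = (h * w * h⁻¹) * m := by group
    have hSWphiF : ∀ hh0 : ↥((inducedHom Δ Gp hΔ).range), ↑hh0 ∈ SW → ↑(φ hh0) ∈ SW := by
      intro hh0 hw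
      rw [hSWdef]
      refine Subgroup.mem_inf.mpr ⟨(φ hh0).2, ?_⟩
      rw [Subgroup.mem_centralizer_iff]
      intro m hm
      have hmH : m ∈ ((inducedHom Δ Gp hΔ).range) := hMleH hm
      have hsymmM : ↑(φ.symm ⟨m, hmH⟩) ∈ M := hphiMsymm ⟨m, hmH⟩ hm
      have hcomm : ↑(φ.symm ⟨m, hmH⟩) * ↑hh0 = ↑hh0 * (↑(φ.symm ⟨m, hmH⟩) : Equiv.Perm ↥Δ) :=
        hSWcent _ hw _ hsymmM
      have hcomm2 : φ.symm ⟨m, hmH⟩ * hh0 = hh0 * φ.symm ⟨m, hmH⟩ := Subtype.ext (by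
        push_cast
        exact hcomm)
      have hcomm3 : φ (φ.symm ⟨m, hmH⟩ * hh0) = φ (hh0 * φ.symm ⟨m, hmH⟩) := by rw [hcomm2]
      rw [map_mul, map_mul, MulEquiv.apply_symm_apply] at hcomm3
      have := congrArg (fun z : ↥((inducedHom Δ Gp hΔ).range) => (z : Equiv.Perm ↥Δ)) hcomm3
      simpa using this
    have hSWphiS : ∀ hh0 : ↥((inducedHom Δ Gp hΔ).range), ↑(φ hh0) ∈ SW → ↑hh0 ∈ SW := by
      intro hh0 hw
      rw [hSWdef]
      refine Subgroup.mem_inf.mpr ⟨hh0.2, ?_⟩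
      rw [Subgroup.mem_centralizer_iff]
      intro m hm
      have hmH : m ∈ ((inducedHom Δ Gp hΔ).range) := hMleH hm
      have hMphi : ↑(φ ⟨m, hmH⟩) ∈ M := hphiM ⟨m, hmH⟩ hm
      have hcomm : ↑(φ ⟨m, hmH⟩) * ↑(φ hh0) = ↑(φ hh0) * (↑(φ ⟨m, hmH⟩) : Equiv.Perm ↥Δ) :=
        hSWcent _ hw _ hMphi
      have hcomm2 : φ ⟨m, hmH⟩ * φ hh0 = φ hh0 * φ ⟨m, hmH⟩ := Subtype.ext (by
        push_cast
        exact hcomm)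
      rw [← map_mul, ← map_mul] at hcomm2
      have hcomm3 := φ.injective hcomm2
      have := congrArg (fun z : ↥((inducedHom Δ Gp hΔ).range) => (z : Equiv.Perm ↥Δ)) hcomm3
      simpa using this
    -- lift to V
    intro w hw
    by_contra hw1
    set WV := Subgroup.map Gp.subtype (Subgroup.comap (inducedHom Δ Gp hΔ) SW) with hWVdef
    have hWVmem : ∀ x, x ∈ WV ↔ ∃ b : ↥Gp, (inducedHom Δ Gp hΔ) b ∈ SW ∧ ↑b = x := by
      intro x
      rw [hWVdef]
      constructor
      · rintro ⟨b, hb, rfl⟩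
        exact ⟨b, Subgroup.mem_comap.mp hb, rfl⟩
      · rintro ⟨b, hb, rfl⟩
        exact ⟨b, Subgroup.mem_comap.mpr hb, rfl⟩
    have hWVG : WV ≤ G := le_trans (Subgroup.map_subtype_le _) hGpG
    have hWVgconj : ∀ x ∈ WV, g * x * g⁻¹ ∈ WV := by
      intro x hx
      obtain ⟨b, hb, rfl⟩ := (hWVmem x).mp hx
      obtain ⟨b', hb'perm, hb'iota⟩ := hconjB b
      have hphiSW : ↑(φ ⟨(inducedHom Δ Gp hΔ) b', ⟨b', rfl⟩⟩) ∈ SW := by rw [← hb'iota]; exact hb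
      have hSWb' : (inducedHom Δ Gp hΔ) b' ∈ SW := hSWphiS ⟨(inducedHom Δ Gp hΔ) b', ⟨b', rfl⟩⟩ hphiSW
      refine (hWVmem _).mpr ⟨b', hSWb', ?_⟩
      rw [hb'perm]
    have hWVnorm : NormalIn WV G := by
      refine ⟨hWVG, ?_⟩
      intro a haG x hx
      by_cases hap : a ∈ Gp
      · obtain ⟨b, hb, rfl⟩ := (hWVmem x).mp hx
        refine (hWVmem _).mpr ⟨⟨a, hap⟩ * b * ⟨a, hap⟩⁻¹, ?_, by push_cast; rfl⟩
        · rw [map_mul, map_mul, map_inv]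
          exact hSWnorm _ ⟨⟨a, hap⟩, rfl⟩ _ hb
      · have hb0 : a * g⁻¹ ∈ Gp := hnn haG hgiG hap hginot
        have hgx : g * x * g⁻¹ ∈ WV := hWVgconj x hx
        have he : a * x * a⁻¹ = (a * g⁻¹) * (g * x * g⁻¹) * (a * g⁻¹)⁻¹ := by group
        rw [he]
        obtain ⟨b, hb, hbe⟩ := (hWVmem _).mp hgx
        refine (hWVmem _).mpr ⟨⟨a * g⁻¹, hb0⟩ * b * ⟨a * g⁻¹, hb0⟩⁻¹, ?_, ?_⟩
        · rw [map_mul, map_mul, map_inv]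
          exact hSWnorm _ ⟨⟨a * g⁻¹, hb0⟩, rfl⟩ _ hb
        · push_cast
          rw [hbe]
    have hWVne : WV ≠ ⊥ := by
      obtain ⟨b, hb⟩ := MonoidHom.mem_range.mp ((Subgroup.mem_inf.mp hw).1)
      intro hbot
      have hbW : (↑b : Equiv.Perm V) ∈ WV := (hWVmem _).mpr ⟨b, by rw [hb]; exact hw, rfl⟩
      rw [hbot, Subgroup.mem_bot] at hbW
      apply hw1
      rw [← hb]
      have : b = 1 := Subtype.ext hbW
      rw [this, map_one]
    have hle2 := hbqp.1 WV hWVnorm hWVne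
    -- SW is transitive on Δ
    have hSWtrans : ∀ x y : ↥Δ, ∃ cw ∈ SW, cw x = y := by
      by_contra hnT
      push_neg at hnT
      obtain ⟨x, y, hxy⟩ := hnT
      have hne12 : orbMk WV (↑x : V) ≠ orbMk WV (↑y : V) := by
        intro he
        obtain ⟨c, hc, hce⟩ := (orbMk_eq_iff WV _ _).mp he
        obtain ⟨b, hb, rfl⟩ := (hWVmem c).mp hc
        have hby : ((inducedHom Δ Gp hΔ) b) y = x := Subtype.ext hce
        have hinv : ((inducedHom Δ Gp hΔ) b)⁻¹ x = y := by rw [← hby, Equiv.Perm.inv_apply_self]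
        exact hxy (((inducedHom Δ Gp hΔ) b)⁻¹) (SW.inv_mem hb) hinv
      have hne13 : orbMk WV (↑x : V) ≠ orbMk WV w₀ := by
        intro he
        obtain ⟨c, hc, hce⟩ := (orbMk_eq_iff WV _ _).mp he
        obtain ⟨b, hb, rfl⟩ := (hWVmem c).mp hc
        have : (↑b : Equiv.Perm V) w₀ ∈ Δ' := (hΔ' ↑b b.2 w₀).mp hw₀
        rw [hce] at this
        exact hdisj _ x.2 this
      have hne23 : orbMk WV (↑y : V) ≠ orbMk WV w₀ := by
        intro he
        obtain ⟨c, hc, hce⟩ := (orbMk_eq_iff WV _ _).mp he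
        obtain ⟨b, hb, rfl⟩ := (hWVmem c).mp hc
        have : (↑b : Equiv.Perm V) w₀ ∈ Δ' := (hΔ' ↑b b.2 w₀).mp hw₀
        rw [hce] at this
        exact hdisj _ y.2 this
      have h3 := three_le_nat_card hne12 hne13 hne23
      omega
    -- SW transitive + semiregular: contradiction
    apply hNoReg SW hSWleH hSWnorm hSWtrans
    intro a ha u hau
    apply Equiv.ext
    intro v
    simp only [Equiv.Perm.one_apply]
    obtain ⟨m, hm, hmv⟩ := hMtrans u v
    have hcm := hSWcent a ha m hm
    calc a v = a (m u) := by rw [hmv]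
      _ = (a * m) u := rfl
      _ = (m * a) u := by rw [← hcm]
      _ = m (a u) := rfl
      _ = m u := by rw [hau]
      _ = v := hmv
  -- ======== Part I: C is not transitive ========
  have hCintrans : ¬ (∀ x y : ↥Δ, ∃ c ∈ C, c x = y) := by
    intro hCtrans
    set Dφ := Subgroup.map ((inducedHom Δ Gp hΔ).range).subtype (Subgroup.map φ.toMonoidHom (C.subgroupOf ((inducedHom Δ Gp hΔ).range))) with hDφdef
    have hDmem : ∀ y, y ∈ Dφ ↔ ∃ ct : ↥((inducedHom Δ Gp hΔ).range), ↑ct ∈ C ∧ ↑(φ ct) = y := by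
      intro y
      rw [hDφdef]
      constructor
      · rintro ⟨z, hz, rfl⟩
        obtain ⟨ct, hct, rfl⟩ := Subgroup.mem_map.mp hz
        exact ⟨ct, Subgroup.mem_subgroupOf.mp hct, rfl⟩
      · rintro ⟨ct, hct, rfl⟩
        exact ⟨φ ct, Subgroup.mem_map.mpr ⟨ct, Subgroup.mem_subgroupOf.mpr hct, rfl⟩, rfl⟩
    have hDleH : Dφ ≤ ((inducedHom Δ Gp hΔ).range) := by rw [hDφdef]; exact Subgroup.map_subtype_le _
    have hcardD : Nat.card Dφ = Nat.card C := by
      rw [hDφdef]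
      have e1 := Subgroup.subgroupOfEquivOfLe hCleH
      have e2 := MulEquiv.subgroupMap φ (C.subgroupOf ((inducedHom Δ Gp hΔ).range))
      have e3 := Subgroup.equivMapOfInjective (Subgroup.map φ.toMonoidHom (C.subgroupOf ((inducedHom Δ Gp hΔ).range)))
        ((inducedHom Δ Gp hΔ).range).subtype (Subgroup.subtype_injective ((inducedHom Δ Gp hΔ).range))
      calc Nat.card (Subgroup.map ((inducedHom Δ Gp hΔ).range).subtype (Subgroup.map φ.toMonoidHom (C.subgroupOf ((inducedHom Δ Gp hΔ).range))))
          = Nat.card (Subgroup.map φ.toMonoidHom (C.subgroupOf ((inducedHom Δ Gp hΔ).range))) :=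
            (Nat.card_congr e3.toEquiv).symm
        _ = Nat.card (C.subgroupOf ((inducedHom Δ Gp hΔ).range)) := (Nat.card_congr e2.toEquiv).symm
        _ = Nat.card C := Nat.card_congr e1.toEquiv
    have hDnorm : ∀ h ∈ ((inducedHom Δ Gp hΔ).range), ∀ y ∈ Dφ, h * y * h⁻¹ ∈ Dφ := by
      intro h hh y hy
      obtain ⟨ct, hct, rfl⟩ := (hDmem y).mp hy
      refine (hDmem _).mpr ⟨φ.symm ⟨h, hh⟩ * ct * (φ.symm ⟨h, hh⟩)⁻¹, ?_, ?_⟩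
      · have h9 := hCnorm _ (φ.symm ⟨h, hh⟩).2 _ hct
        simp only [Subgroup.coe_mul, InvMemClass.coe_inv]
        exact h9
      · rw [map_mul, map_mul, map_inv, MulEquiv.apply_symm_apply]
        simp only [Subgroup.coe_mul, InvMemClass.coe_inv]
    have hCDtriv : ∀ z, z ∈ C → z ∈ Dφ → z = 1 := by
      intro z hzC hzD
      apply hWtriv
      refine Subgroup.mem_inf.mpr ⟨hCleH hzC, ?_⟩
      rw [Subgroup.mem_centralizer_iff]
      intro m hm
      obtain ⟨r, hr, yq, hyq, rfl⟩ := hMdec m hm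
      have hzr : r * z = z * r := hCcent z hzC r hr
      have hzy : yq * z = z * yq := by
        obtain ⟨ct, hct, rfl⟩ := (hDmem z).mp hzD
        obtain ⟨rt, hrt, rfl⟩ := (hRφmem yq).mp hyq
        have hcr : (↑rt : Equiv.Perm ↥Δ) * ↑ct = ↑ct * ↑rt := hCcent _ hct _ hrt
        have hcr2 : rt * ct = ct * rt := Subtype.ext (by push_cast; exact hcr)
        have := congrArg (fun z : ↥((inducedHom Δ Gp hΔ).range) => (z : Equiv.Perm ↥Δ)) (congrArg φ hcr2)
        simpa [map_mul] using this
      calc r * yq * z = r * (z * yq) := by rw [mul_assoc, hzy]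
        _ = (r * z) * yq := by group
        _ = z * (r * yq) := by rw [hzr]; group
    have hCDcomm : ∀ c ∈ C, ∀ d ∈ Dφ, c * d = d * c := by
      intro c hc d hd
      have hz : c * d * c⁻¹ * d⁻¹ = 1 := by
        apply hCDtriv
        · have h1 : d * c⁻¹ * d⁻¹ ∈ C := hCnorm d (hDleH hd) c⁻¹ (C.inv_mem hc)
          have h2 := C.mul_mem hc h1
          rwa [show c * (d * c⁻¹ * d⁻¹) = c * d * c⁻¹ * d⁻¹ by group] at h2
        · have h1 : c * d * c⁻¹ ∈ Dφ := hDnorm c (hCleH hc) d hd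
          exact Dφ.mul_mem h1 (Dφ.inv_mem hd)
      have h1' : ⁅c, d⁆ = 1 := by rw [commutatorElement_def]; exact hz
      exact (commutatorElement_eq_one_iff_commute.mp h1').eq
    have hDsemi : ∀ d ∈ Dφ, ∀ u : ↥Δ, d u = u → d = 1 := by
      intro d hd u hdu
      apply Equiv.ext
      intro v
      simp only [Equiv.Perm.one_apply]
      obtain ⟨c, hc, hcv⟩ := hCtrans u v
      have hcd := hCDcomm c hc d hd
      calc d v = d (c u) := by rw [hcv]
        _ = (d * c) u := rfl
        _ = (c * d) u := by rw [← hcd]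
        _ = c (d u) := rfl
        _ = c u := by rw [hdu]
        _ = v := hcv
    have hsurC : Function.Surjective (fun c : ↥C => (↑c : Equiv.Perm ↥Δ) u₀) := by
      intro v
      obtain ⟨c, hc, hcv⟩ := hCtrans u₀ v
      exact ⟨⟨c, hc⟩, hcv⟩
    have hc1 : Nat.card ↥Δ ≤ Nat.card C := Nat.card_le_card_of_surjective _ hsurC
    have hinjD : Function.Injective (fun d : ↥Dφ => (↑d : Equiv.Perm ↥Δ) u₀) := by
      intro d1 d2 h12
      simp only at h12
      have hfix : (↑(d2⁻¹ * d1) : Equiv.Perm ↥Δ) u₀ = u₀ := by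
        have e : (↑(d2⁻¹ * d1) : Equiv.Perm ↥Δ) = (↑d2 : Equiv.Perm ↥Δ)⁻¹ * ↑d1 := by
          push_cast
          rfl
        rw [e, Equiv.Perm.mul_apply, h12]
        exact Equiv.Perm.inv_apply_self _ _
      have h1 := hDsemi _ (d2⁻¹ * d1).2 u₀ hfix
      have h2 : d2⁻¹ * d1 = 1 := Subtype.ext h1
      calc d1 = d2 * (d2⁻¹ * d1) := by group
        _ = d2 := by rw [h2]; group
    have hc2 : Nat.card Dφ ≤ Nat.card ↥Δ := Nat.card_le_card_of_injective _ hinjD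
    have hceq : Nat.card Dφ = Nat.card ↥Δ := by omega
    have hbijD : Function.Bijective (fun d : ↥Dφ => (↑d : Equiv.Perm ↥Δ) u₀) :=
      (Nat.bijective_iff_injective_and_card _).mpr ⟨hinjD, hceq⟩
    have hDtrans : ∀ x y : ↥Δ, ∃ d ∈ Dφ, d x = y := by
      intro x y
      obtain ⟨d1, hd1⟩ := hbijD.2 x
      obtain ⟨d2, hd2⟩ := hbijD.2 y
      refine ⟨(d2 : Equiv.Perm ↥Δ) * (d1 : Equiv.Perm ↥Δ)⁻¹,
        Dφ.mul_mem d2.2 (Dφ.inv_mem d1.2), ?_⟩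
      have e : ((d2 : Equiv.Perm ↥Δ) * (d1 : Equiv.Perm ↥Δ)⁻¹) x
          = (d2 : Equiv.Perm ↥Δ) ((d1 : Equiv.Perm ↥Δ)⁻¹ x) := rfl
      rw [e, ← hd1, Equiv.Perm.inv_apply_self]
      exact hd2
    exact hNoReg Dφ hDleH hDnorm hDtrans hDsemi
  -- ======== Part J: quotient machinery ========
  have hclassH : ∀ (h : Equiv.Perm ↥Δ), h ∈ ((inducedHom Δ Gp hΔ).range) → ∀ x y : ↥Δ,
      orbMk C x = orbMk C y → orbMk C (h x) = orbMk C (h y) := by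
    intro h hh x y hxy
    obtain ⟨c, hc, hce⟩ := (orbMk_eq_iff C x y).mp hxy
    refine (orbMk_eq_iff C _ _).mpr ⟨h * c * h⁻¹, hCnorm h hh c hc, ?_⟩
    simp only [Equiv.Perm.mul_apply, Equiv.Perm.inv_apply_self]
    rw [hce]
  have hCclass : ∀ c ∈ C, ∀ x : ↥Δ, orbMk C (c x) = orbMk C x := by
    intro c hc x
    exact (orbMk_eq_iff C _ _).mpr ⟨c, hc, rfl⟩
  obtain ⟨x₀, y₀, hxy₀⟩ : ∃ x y : ↥Δ, ∀ c ∈ C, c x ≠ y := by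
    by_contra hno
    push_neg at hno
    exact hCintrans fun x y => hno x y
  have horb₀ : orbMk C y₀ ≠ orbMk C x₀ := by
    intro he
    obtain ⟨c, hc, hce⟩ := (orbMk_eq_iff C _ _).mp he
    exact hxy₀ c hc hce
  have hPunch : (∀ r ∈ R, ∀ x : ↥Δ, orbMk C (r x) = orbMk C x) → False := by
    intro hR
    have hMq : ∀ m ∈ M, ∀ x : ↥Δ, orbMk C (m x) = orbMk C x := by
      intro m hm x
      obtain ⟨r, hr, yq, hyq, rfl⟩ := hMdec m hm
      have e : (r * yq) x = r (yq x) := rfl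
      rw [e, hR r hr, hCclass yq (hRφleC hyq)]
    obtain ⟨m, hm, hme⟩ := hMtrans x₀ y₀
    apply horb₀
    rw [← hme, hMq m hm]
  set KT := fixSubgroup C ((inducedHom Δ Gp hΔ).range) with hKTdef
  have hKTmem : ∀ z, z ∈ KT ↔ (z ∈ ((inducedHom Δ Gp hΔ).range) ∧
      ∀ x : ↥Δ, orbMk C (z x) = orbMk C x) := fun z => Iff.rfl
  have hPunch2 : (∀ r1 ∈ R, ∀ r2 ∈ R, ∀ x : ↥Δ,
      orbMk C (r1 (r2 x)) = orbMk C (r2 (r1 x))) → False := by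
    intro hswap
    apply hPunch
    have hcomKT : ∀ r1 ∈ R, ∀ r2 ∈ R, ∀ x : ↥Δ,
        orbMk C ((⁅r1, r2⁆ : Equiv.Perm ↥Δ) x) = orbMk C x := by
      intro r1 hr1 r2 hr2 x
      have e : (⁅r1, r2⁆ : Equiv.Perm ↥Δ) x = r1 (r2 (r1⁻¹ (r2⁻¹ x))) := by
        simp [commutatorElement_def, Equiv.Perm.mul_apply]
      rw [e, hswap r1 hr1 r2 hr2 _]
      have h2 : r2 (r1 (r1⁻¹ (r2⁻¹ x))) = x := by
        rw [Equiv.Perm.apply_inv_self, Equiv.Perm.apply_inv_self]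
      rw [h2]
    have hcle : ⁅R, R⁆ ≤ KT := by
      rw [Subgroup.commutator_le]
      intro g1 h1 g2 h2
      refine (hKTmem _).mpr ⟨?_, hcomKT g1 h1 g2 h2⟩
      rw [commutatorElement_def]
      exact ((inducedHom Δ Gp hΔ).range).mul_mem (((inducedHom Δ Gp hΔ).range).mul_mem (((inducedHom Δ Gp hΔ).range).mul_mem (hRleH h1) (hRleH h2))
        (((inducedHom Δ Gp hΔ).range).inv_mem (hRleH h1))) (((inducedHom Δ Gp hΔ).range).inv_mem (hRleH h2))
    rw [hRperf] at hcle
    intro r hr x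
    exact ((hKTmem r).mp (hcle hr)).2 x
  have hquotF : ∀ r1, r1 ∈ R → ∃ F : Equiv.Perm (Quotient (MulAction.orbitRel C ↥Δ)),
      (∀ x : ↥Δ, F (orbMk C x) = orbMk C (r1 x)) ∧
      (∀ a b, quotArc (subHalfArc A Δ Δ') C a b →
        quotArc (subHalfArc A Δ Δ') C (F a) (F b)) := by
    intro r1 hr1
    obtain ⟨F, hF⟩ := quotPerm C r1 (fun c hc => hCnorm r1 (hRleH hr1) c hc)
      (fun c hc => by
        have h9 := hCnorm r1⁻¹ (((inducedHom Δ Gp hΔ).range).inv_mem (hRleH hr1)) c hc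
        rwa [inv_inv] at h9)
    refine ⟨F, hF, ?_⟩
    rintro a b ⟨u, u', hu, hu', harc⟩
    exact ⟨r1 u, r1 u', by rw [← hu]; exact (hF u).symm,
      by rw [← hu']; exact (hF u').symm, hHpres r1 (hRleH hr1) _ _ harc⟩
  have hcommPunch : (∀ (F1 F2 : Equiv.Perm (Quotient (MulAction.orbitRel C ↥Δ))),
      (∀ a b, quotArc (subHalfArc A Δ Δ') C a b →
        quotArc (subHalfArc A Δ Δ') C (F1 a) (F1 b)) →
      (∀ a b, quotArc (subHalfArc A Δ Δ') C a b →
        quotArc (subHalfArc A Δ Δ') C (F2 a) (F2 b)) →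
      ∀ q, F1 (F2 q) = F2 (F1 q)) → False := by
    intro hcom
    apply hPunch2
    intro r1 hr1 r2 hr2 w
    obtain ⟨F1, hF1, hF1p⟩ := hquotF r1 hr1
    obtain ⟨F2, hF2, hF2p⟩ := hquotF r2 hr2
    have h := hcom F1 F2 hF1p hF2p (orbMk C w)
    rw [hF2 w, hF1 (r2 w), hF1 w, hF2 (r1 w)] at h
    exact h
  -- ======== Part K: at least three orbits ========
  haveI hQfin : Finite (Quotient (MulAction.orbitRel C ↥Δ)) := Quotient.finite _
  haveI hQne : Nonempty (Quotient (MulAction.orbitRel C ↥Δ)) := ⟨orbMk C u₀⟩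
  have hcard1 : Nat.card (Quotient (MulAction.orbitRel C ↥Δ)) ≠ 1 := by
    intro h1
    have hsub : Subsingleton (Quotient (MulAction.orbitRel C ↥Δ)) :=
      (Nat.card_eq_one_iff_unique.mp h1).1
    apply hCintrans
    intro x y
    have he : orbMk C y = orbMk C x := Subsingleton.elim _ _
    obtain ⟨c, hc, hce⟩ := (orbMk_eq_iff C _ _).mp he
    exact ⟨c, hc, hce⟩
  have hcard2 : Nat.card (Quotient (MulAction.orbitRel C ↥Δ)) ≠ 2 := by
    intro h2
    apply hcommPunch
    intro F1 F2 _ _ q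
    exact equiv_comm_of_card_two h2 F1 F2 q
  have h3card : 3 ≤ Nat.card (Quotient (MulAction.orbitRel C ↥Δ)) := by
    have h0 : 0 < Nat.card (Quotient (MulAction.orbitRel C ↥Δ)) := Nat.card_pos
    omega
  -- ======== Part L: quotient connectivity ========
  have hQout : ∀ a, ∃ b, quotArc (subHalfArc A Δ Δ') C a b := by
    intro a
    obtain ⟨xa, hxa⟩ := Quotient.exists_rep a
    obtain ⟨yb, hyb⟩ := hBout xa
    exact ⟨orbMk C yb, xa, yb, hxa, rfl, hyb⟩
  have hQin : ∀ a, ∃ b, quotArc (subHalfArc A Δ Δ') C b a := by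
    intro a
    obtain ⟨xa, hxa⟩ := Quotient.exists_rep a
    obtain ⟨yb, hyb⟩ := hBin xa
    exact ⟨orbMk C yb, yb, xa, rfl, hxa, hyb⟩
  have hQconn : ∀ a b : Quotient (MulAction.orbitRel C ↥Δ),
      Relation.ReflTransGen (fun u v => quotArc (subHalfArc A Δ Δ') C u v ∨
        quotArc (subHalfArc A Δ Δ') C v u) a b := by
    have hliftc : ∀ x y : ↥Δ, Relation.ReflTransGen
        (fun a b => subHalfArc A Δ Δ' a b ∨ subHalfArc A Δ Δ' b a) x y →
        Relation.ReflTransGen (fun u v => quotArc (subHalfArc A Δ Δ') C u v ∨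
          quotArc (subHalfArc A Δ Δ') C v u) (orbMk C x) (orbMk C y) := by
      intro x y h
      induction h with
      | refl => exact Relation.ReflTransGen.refl
      | @tail c d hxc hcd ih =>
        refine ih.tail ?_
        rcases hcd with h | h
        · exact Or.inl ⟨c, d, rfl, rfl, h⟩
        · exact Or.inr ⟨d, c, rfl, rfl, h⟩
    intro a b
    obtain ⟨xa, hxa⟩ := Quotient.exists_rep a
    obtain ⟨xb, hxb⟩ := Quotient.exists_rep b
    have hxa' : orbMk C xa = a := hxa
    have hxb' : orbMk C xb = b := hxb
    have h9 := hliftc xa xb (hBconn xa xb)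
    rwa [hxa', hxb'] at h9
  -- ======== Part M: asymmetry ========
  have hdigon : ∀ (x y z : ↥Δ), subHalfArc A Δ Δ' x y → subHalfArc A Δ Δ' y z →
      orbMk C z = orbMk C x → False := by
    intro x y z hxy hyz hzx
    have hallret : ∀ (a b c : ↥Δ), subHalfArc A Δ Δ' a b → subHalfArc A Δ Δ' b c →
        orbMk C c = orbMk C a := by
      intro a b c hab hbc
      have h1 : IsArcSeq (subHalfArc A Δ Δ') 2 ![x, y, z] := by
        intro i
        fin_cases i
        · simpa using hxy
        · simpa using hyz
      have h2 : IsArcSeq (subHalfArc A Δ Δ') 2 ![a, b, c] := by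
        intro i
        fin_cases i
        · simpa using hab
        · simpa using hbc
      obtain ⟨bb, hbb⟩ := hHt 2 (by omega) ![x, y, z] ![a, b, c] h1 h2
      have e0 : ((inducedHom Δ Gp hΔ) bb) x = a := by simpa using hbb 0
      have e2 : ((inducedHom Δ Gp hΔ) bb) z = c := by simpa using hbb 2
      have h9 := hclassH ((inducedHom Δ Gp hΔ) bb) ⟨bb, rfl⟩ z x hzx
      rw [e0, e2] at h9
      exact h9
    have hq1 : ∀ (a b b' : Quotient (MulAction.orbitRel C ↥Δ)),
        quotArc (subHalfArc A Δ Δ') C a b → quotArc (subHalfArc A Δ Δ') C a b' → b = b' := by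
      rintro a b b' ⟨y1, z1, hy1, hz1, h1⟩ ⟨y2, z2, hy2, hz2, h2⟩
      obtain ⟨x1, hx1⟩ := hBin y1
      have hb : b = orbMk C x1 := by rw [← hz1]; exact hallret x1 y1 z1 hx1 h1
      have hy12 : orbMk C y2 = orbMk C y1 := by rw [hy2, hy1]
      obtain ⟨c, hc, hce⟩ := (orbMk_eq_iff C y2 y1).mp hy12
      have harc2 : subHalfArc A Δ Δ' (c x1) (c y1) := hHpres c (hCleH hc) _ _ hx1
      rw [hce] at harc2
      have hb' : b' = orbMk C (c x1) := by rw [← hz2]; exact hallret (c x1) y2 z2 harc2 h2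
      rw [hb, hb', hCclass c hc x1]
    obtain ⟨σQ, hσQ, hpowQ⟩ := outdeg_one_powers (quotArc (subHalfArc A Δ Δ') C)
      hQconn hQout hQin hq1
    apply hcommPunch
    intro F1 F2 h1p h2p q
    obtain ⟨k1, hk1⟩ := hpowQ F1 h1p
    obtain ⟨k2, hk2⟩ := hpowQ F2 h2p
    rw [hk1, hk2]
    have hcz : σQ ^ k1 * σQ ^ k2 = σQ ^ k2 * σQ ^ k1 := ((Commute.refl σQ).zpow_zpow k1 k2).eq
    have h9 := congrArg (fun e : Equiv.Perm (Quotient (MulAction.orbitRel C ↥Δ)) => e q) hcz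
    simpa [Equiv.Perm.mul_apply] using h9
  have hisdig : IsDigraph (quotArc (subHalfArc A Δ Δ') C) := by
    rintro U U' ⟨x, y, hx, hy, hxy⟩ ⟨y2, z2, hy2, hz2, hyz⟩
    have hyy : orbMk C y = orbMk C y2 := by rw [hy, hy2]
    obtain ⟨c, hc, hce⟩ := (orbMk_eq_iff C y y2).mp hyy
    have harc2 : subHalfArc A Δ Δ' (c y2) (c z2) := hHpres c (hCleH hc) _ _ hyz
    rw [hce] at harc2
    have hcz : orbMk C (c z2) = orbMk C x := by
      rw [hCclass c hc z2, hz2, ← hx]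
    exact hdigon x y (c z2) hxy harc2 hcz
  -- ======== Part N: not a directed cycle ========
  have hnotcycQ : ∀ r : ℕ, 3 ≤ r → ¬ IsoDirectedCycle (quotArc (subHalfArc A Δ Δ') C) r := by
    rintro r hr ⟨e, he⟩
    apply hcommPunch
    intro F1 F2 h1p h2p q
    have hrot : ∀ (F : Equiv.Perm (Quotient (MulAction.orbitRel C ↥Δ))),
        (∀ a b, quotArc (subHalfArc A Δ Δ') C a b →
          quotArc (subHalfArc A Δ Δ') C (F a) (F b)) →
        ∀ z : ZMod r, e (F (e.symm z)) = z + e (F (e.symm 0)) := by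
      intro F hFp
      have hstep : ∀ z : ZMod r, e (F (e.symm (z + 1))) = e (F (e.symm z)) + 1 := by
        intro z
        have harc : quotArc (subHalfArc A Δ Δ') C (e.symm z) (e.symm (z + 1)) := by
          rw [he]
          simp
        have h9 := hFp _ _ harc
        rw [he] at h9
        exact h9
      intro z
      exact zmod_rot hr (fun z => e (F (e.symm z))) hstep z
    have e1 : ∀ (F : Equiv.Perm (Quotient (MulAction.orbitRel C ↥Δ))),
        (∀ a b, quotArc (subHalfArc A Δ Δ') C a b →
          quotArc (subHalfArc A Δ Δ') C (F a) (F b)) →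
        ∀ q', e (F q') = e q' + e (F (e.symm 0)) := by
      intro F hFp q'
      have h9 := hrot F hFp (e q')
      rwa [e.symm_apply_apply] at h9
    apply e.injective
    rw [e1 F1 h1p (F2 q), e1 F2 h2p q, e1 F2 h2p (F1 q), e1 F1 h1p q]
    ring
  -- ======== Part O: faithfulness, transitivity, quasiprimitivity ========
  have hKTnorm : ∀ h ∈ ((inducedHom Δ Gp hΔ).range), ∀ k ∈ KT, h * k * h⁻¹ ∈ KT := by
    intro h hh k hk
    obtain ⟨hkH, hkfix⟩ := (hKTmem k).mp hk
    refine (hKTmem _).mpr ⟨((inducedHom Δ Gp hΔ).range).mul_mem (((inducedHom Δ Gp hΔ).range).mul_mem hh hkH) (((inducedHom Δ Gp hΔ).range).inv_mem hh), fun x => ?_⟩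
    have e : (h * k * h⁻¹) x = h (k (h⁻¹ x)) := rfl
    rw [e]
    have h1 := hkfix (h⁻¹ x)
    have h2 := hclassH h hh _ _ h1
    rw [Equiv.Perm.apply_inv_self] at h2
    exact h2
  have hKTR : KT ⊓ R = ⊥ := by
    by_cases hbot : KT ⊓ R = ⊥
    · exact hbot
    · exfalso
      have hnorm : NormalIn (KT ⊓ R) ((inducedHom Δ Gp hΔ).range) :=
        ⟨le_trans inf_le_right hRleH, fun h hh x hx => by
          have hx' := Subgroup.mem_inf.mp hx
          exact Subgroup.mem_inf.mpr ⟨hKTnorm h hh x hx'.1, hRnorm h hh x hx'.2⟩⟩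
      have heq := hRmin3 _ hnorm hbot inf_le_right
      have hRKT : R ≤ KT := by rw [← heq]; exact inf_le_left
      exact hPunch (fun r hr x => ((hKTmem r).mp (hRKT hr)).2 x)
  have hfaith : ∀ h ∈ ((inducedHom Δ Gp hΔ).range), (∀ x : ↥Δ, orbMk C (h x) = orbMk C x) → h ∈ C := by
    intro h hh hfixq
    have hhKT : h ∈ KT := (hKTmem h).mpr ⟨hh, hfixq⟩
    rw [hC]
    refine Subgroup.mem_inf.mpr ⟨hh, ?_⟩
    rw [Subgroup.mem_centralizer_iff]
    intro r hr
    have hz : ⁅h, r⁆ ∈ KT ⊓ R := by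
      refine Subgroup.mem_inf.mpr ⟨?_, ?_⟩
      · rw [commutatorElement_def,
          show h * r * h⁻¹ * r⁻¹ = h * (r * h⁻¹ * r⁻¹) by group]
        exact KT.mul_mem hhKT (hKTnorm r (hRleH hr) h⁻¹ (KT.inv_mem hhKT))
      · rw [commutatorElement_def]
        exact R.mul_mem (hRnorm h hh r hr) (R.inv_mem hr)
    rw [hKTR, Subgroup.mem_bot] at hz
    exact ((commutatorElement_eq_one_iff_commute.mp hz).eq).symm
  have hvtQ : ∀ U U' : Quotient (MulAction.orbitRel C ↥Δ), ∃ h ∈ ((inducedHom Δ Gp hΔ).range),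
      ∀ x : ↥Δ, orbMk C x = U → orbMk C (h x) = U' := by
    intro U U'
    obtain ⟨u, hu0⟩ := Quotient.exists_rep U
    obtain ⟨u', hu0'⟩ := Quotient.exists_rep U'
    have hu : orbMk C u = U := hu0
    have hu' : orbMk C u' = U' := hu0'
    obtain ⟨b, hbGp, hb⟩ := htransΔ ↑u u.2 ↑u' u'.2
    refine ⟨(inducedHom Δ Gp hΔ) ⟨b, hbGp⟩, ⟨⟨b, hbGp⟩, rfl⟩, ?_⟩
    intro x hx
    have h1 : orbMk C x = orbMk C u := by rw [hx, ← hu]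
    have h2 := hclassH _ ⟨⟨b, hbGp⟩, rfl⟩ x u h1
    have h3 : ((inducedHom Δ Gp hΔ) ⟨b, hbGp⟩) u = u' := Subtype.ext hb
    rw [h2, h3]
    exact hu'
  have hqprim : ∀ L : Subgroup (Equiv.Perm ↥Δ), NormalIn L ((inducedHom Δ Gp hΔ).range) → C ≤ L → C ≠ L →
      ∀ x y : ↥Δ, ∃ l ∈ L, orbMk C (l x) = orbMk C y := by
    intro L hLnorm hCL hCneL x y
    have hRL : R ≤ L := by
      by_cases hbot : L ⊓ R = ⊥
      · exfalso
        apply hCneL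
        apply le_antisymm hCL
        intro l hl
        rw [hC]
        refine Subgroup.mem_inf.mpr ⟨hLnorm.1 hl, ?_⟩
        rw [Subgroup.mem_centralizer_iff]
        intro r hr
        have hz : ⁅l, r⁆ ∈ L ⊓ R := by
          refine Subgroup.mem_inf.mpr ⟨?_, ?_⟩
          · rw [commutatorElement_def,
              show l * r * l⁻¹ * r⁻¹ = l * (r * l⁻¹ * r⁻¹) by group]
            exact L.mul_mem hl (hLnorm.2 r (hRleH hr) l⁻¹ (L.inv_mem hl))
          · rw [commutatorElement_def]
            exact R.mul_mem (hRnorm l (hLnorm.1 hl) r hr) (R.inv_mem hr)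
        rw [hbot, Subgroup.mem_bot] at hz
        exact ((commutatorElement_eq_one_iff_commute.mp hz).eq).symm
      · have hnorm2 : NormalIn (L ⊓ R) ((inducedHom Δ Gp hΔ).range) :=
          ⟨le_trans inf_le_right hRleH, fun h hh z hz => by
            have hz' := Subgroup.mem_inf.mp hz
            exact Subgroup.mem_inf.mpr ⟨hLnorm.2 h hh z hz'.1, hRnorm h hh z hz'.2⟩⟩
        have heq := hRmin3 _ hnorm2 hbot inf_le_right
        rw [← heq]
        exact inf_le_left
    obtain ⟨m, hm, hme⟩ := hMtrans x y
    obtain ⟨r, hr, yq, hyq, hdec⟩ := hMdec m hm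
    refine ⟨m, ?_, by rw [hme]⟩
    rw [hdec]
    exact L.mul_mem (hRL hr) (hCL (hRφleC hyq))
  -- ======== Part P: arc transitivity of the quotient ========
  have hlift : ∀ (t : ℕ) (p : Fin (t + 1) → Quotient (MulAction.orbitRel C ↥Δ)),
      IsArcSeq (quotArc (subHalfArc A Δ Δ') C) t p →
      ∃ x : Fin (t + 1) → ↥Δ, IsArcSeq (subHalfArc A Δ Δ') t x ∧
        ∀ i, orbMk C (x i) = p i := by
    intro t
    induction t with
    | zero =>
      intro p hp
      obtain ⟨u, hu⟩ := Quotient.exists_rep (p 0)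
      refine ⟨fun _ => u, fun i => Fin.elim0 i, fun i => ?_⟩
      have h9 : i = 0 := by
        apply Fin.ext
        simp only [Fin.val_zero]
        have := i.isLt
        omega
      rw [h9]
      exact hu
    | succ n ih =>
      intro p hp
      have hp' : IsArcSeq (quotArc (subHalfArc A Δ Δ') C) n
          (fun i : Fin (n + 1) => p i.castSucc) := by
        intro i
        have h9 := hp i.castSucc
        rw [Fin.succ_castSucc] at h9
        exact h9
      obtain ⟨x, hxseq, hxcl⟩ := ih _ hp'
      obtain ⟨u, u', hu, hu', harc⟩ := hp (Fin.last n)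
      have hcl : orbMk C (x (Fin.last n)) = orbMk C u := by
        rw [hxcl (Fin.last n), ← hu]
      obtain ⟨c, hc, hce⟩ := (orbMk_eq_iff C _ _).mp hcl
      refine ⟨Fin.snoc x (c u'), ?_, ?_⟩
      · intro i
        induction i using Fin.lastCases with
        | last =>
          rw [Fin.succ_last, Fin.snoc_castSucc, Fin.snoc_last]
          have h9 := hHpres c (hCleH hc) u u' harc
          rwa [hce] at h9
        | cast j =>
          rw [Fin.succ_castSucc, Fin.snoc_castSucc, Fin.snoc_castSucc]
          exact hxseq j
      · intro i
        induction i using Fin.lastCases with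
        | last =>
          rw [Fin.snoc_last]
          have h9 : orbMk C (c u') = orbMk C u' := hCclass c hc u'
          rw [h9, hu', ← Fin.succ_last]
        | cast j =>
          rw [Fin.snoc_castSucc]
          exact hxcl j
  have harcQ : ∀ p q : Fin (s / 2 + 1) → Quotient (MulAction.orbitRel C ↥Δ),
      IsArcSeq (quotArc (subHalfArc A Δ Δ') C) (s / 2) p →
      IsArcSeq (quotArc (subHalfArc A Δ Δ') C) (s / 2) q →
      ∃ h ∈ ((inducedHom Δ Gp hΔ).range), ∀ (i : Fin (s / 2 + 1)) (x : ↥Δ),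
        orbMk C x = p i → orbMk C (h x) = q i := by
    intro p q hp hq
    obtain ⟨xp, hxpseq, hxpcl⟩ := hlift _ p hp
    obtain ⟨xq, hxqseq, hxqcl⟩ := hlift _ q hq
    obtain ⟨b, hb⟩ := hHt (s / 2) (by omega) xp xq hxpseq hxqseq
    refine ⟨(inducedHom Δ Gp hΔ) b, ⟨b, rfl⟩, ?_⟩
    intro i x hx
    have h1 : orbMk C x = orbMk C (xp i) := by rw [hx, ← hxpcl i]
    have h2 := hclassH _ ⟨b, rfl⟩ _ _ h1
    rw [hb i] at h2
    rw [h2, hxqcl i]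
  exact ⟨h3card, hisdig, hQconn, hnotcycQ, hfaith, hvtQ, hqprim, harcQ⟩







end ArcTransDigraph
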